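/- arXiv:1801.06585 — 4 statements merged into one kernel-verified Lean document; each statement's English description precedes it below -/
import Mathlib

section
/- Let F and F' be adjacent faces of a triangulation whose z-monodromies satisfy M_F = D_F and M_{F'} = D_{F'}. Then there is a unique (up to reversal) zigzag whose face shadow contains both F and F', and this face shadow is a cyclic sequence of the form F, F', ..., F, ..., F', F, ..., F', ..., i.e., the occurrences of F and F' alternate. -/
open Finset

/-- A (combinatorial) triangulation of a connected closed surface:
a finite set of triangular faces such that every edge lies in exactly two
faces, two distinct faces meet in at most an edge, and the dual graph is
connected. -/
structure Triangulation (V : Type) [Fintype V] [DecidableEq V] where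
  faces : Finset (Finset V)
  faces_nonempty : faces.Nonempty
  card_eq : ∀ F ∈ faces, F.card = 3
  edge_two_faces : ∀ e : Finset V, e.card = 2 → (∃ F ∈ faces, e ⊆ F) →
      (faces.filter fun F => e ⊆ F).card = 2
  inter_le : ∀ F ∈ faces, ∀ F' ∈ faces, F ≠ F' → (F ∩ F').card ≤ 2
  connected : ∀ F ∈ faces, ∀ F' ∈ faces,
      Relation.ReflTransGen
        (fun A B => A ∈ faces ∧ B ∈ faces ∧ (A ∩ B).card = 2) F F'

namespace Triangulation

variable {V : Type} [Fintype V] [DecidableEq V] (T : Triangulation V)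

/-- `e` is an edge of the triangulation. -/
def IsEdge (e : Finset V) : Prop := e.card = 2 ∧ ∃ F ∈ T.faces, e ⊆ F

/-- A zigzag sequence: consecutive edges are adjacent (distinct, sharing a
vertex and a face), the faces containing consecutive pairs are distinct, and
edges two apart are disjoint. -/
def IsZigzagSeq (f : ℕ → Finset V) : Prop :=
  (∀ i, T.IsEdge (f i)) ∧
  (∀ i, f i ≠ f (i + 1) ∧ (f i ∩ f (i + 1)).Nonempty ∧
      ∃ F ∈ T.faces, f i ⊆ F ∧ f (i + 1) ⊆ F) ∧
  (∀ i, ∀ F ∈ T.faces, ∀ F' ∈ T.faces,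
      f i ⊆ F → f (i + 1) ⊆ F → f (i + 1) ⊆ F' → f (i + 2) ⊆ F' → F ≠ F') ∧
  (∀ i, f i ∩ f (i + 2) = ∅)

/-- A zigzag: a zigzag sequence together with its (minimal) period. -/
structure Zigzag where
  seq : ℕ → Finset V
  period : ℕ
  period_pos : 0 < period
  periodic : ∀ i, seq (i + period) = seq i
  period_min : ∀ m, 0 < m → (∀ i, seq (i + m) = seq i) → period ≤ m
  isZigzag : T.IsZigzagSeq seq

variable {T}

/-- Two zigzags are the same cyclic sequence (up to a shift). -/
def Zigzag.Equiv (Z Z' : T.Zigzag) : Prop := ∃ k, ∀ i, Z'.seq i = Z.seq (i + k)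

/-- `Z'` is the reversal of `Z` (up to a shift). -/
def Zigzag.IsReverseOf (Z' Z : T.Zigzag) : Prop :=
  ∃ k, ∀ i, Z'.seq i = Z.seq (k + Z.period - i % Z.period)

/-- The zigzag `Z` contains an edge of the face `F`. -/
def Zigzag.Meets (Z : T.Zigzag) (F : Finset V) : Prop := ∃ i, Z.seq i ⊆ F

/-- `F` is the `i`-th face of the face shadow of `Z`, i.e. the face containing
the `i`-th and `(i+1)`-st edges of `Z`. -/
def Zigzag.ShadowAt (Z : T.Zigzag) (i : ℕ) (F : Finset V) : Prop :=
  F ∈ T.faces ∧ Z.seq i ⊆ F ∧ Z.seq (i + 1) ⊆ F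

/-- At position `i`, the zigzag `Z` traverses the oriented edge from `x`
to `y` (the head `y` is the vertex shared with the next edge). -/
def Zigzag.Passes (Z : T.Zigzag) (i : ℕ) (x y : V) : Prop :=
  Z.seq i = {x, y} ∧ x ≠ y ∧ y ∈ Z.seq (i + 1)

variable (T)

/-- The triangulation is locally z-knotted in the face `F`:
`𝒵(F) = {Z, Z⁻¹}`. -/
def LocallyZKnotted (F : Finset V) : Prop :=
  (∃ Z : T.Zigzag, Z.Meets F) ∧
  ∀ Z Z' : T.Zigzag, Z.Meets F → Z'.Meets F → Z.Equiv Z' ∨ Z'.IsReverseOf Z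

/-- The triangulation is z-knotted: it has exactly one zigzag up to
reversal. -/
def ZKnotted : Prop :=
  Nonempty T.Zigzag ∧ ∀ Z Z' : T.Zigzag, Z.Equiv Z' ∨ Z'.IsReverseOf Z

/-- The z-monodromy relation of the face `F`: `M_F` sends the oriented edge
`(x,y)` of `F` to the oriented edge `(u,v)` of `F`.  Here `(u,v)` is the first
oriented edge of `F` occurring in the zigzag through `D_F⁻¹(x,y), (x,y)`
after `(x,y)`. -/
def MonodromyRel (F : Finset V) (x y u v : V) : Prop :=
  x ∈ F ∧ y ∈ F ∧
  ∃ Z : T.Zigzag, ∃ i j : ℕ,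
    (∃ z, z ∈ F ∧ z ≠ x ∧ z ≠ y ∧ Z.Passes i z x) ∧
    Z.Passes (i + 1) x y ∧
    i + 1 < j ∧ Z.Passes j u v ∧ u ∈ F ∧ v ∈ F ∧
    (∀ k, i + 1 < k → k < j → ∀ a b, a ∈ F → b ∈ F → ¬ Z.Passes k a b)

/-- The z-monodromy of `F` is the identity (type (M1)). -/
def MFIsId (F : Finset V) : Prop :=
  ∀ x y, x ∈ F → y ∈ F → x ≠ y → T.MonodromyRel F x y x y

/-- The z-monodromy of `F` is `D_F` (type (M2)). -/
def MFIsD (F : Finset V) : Prop :=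
  ∀ x y z : V, ({x, y, z} : Finset V) = F → x ≠ y → y ≠ z → x ≠ z →
    T.MonodromyRel F x y y z

/-- The z-monodromy of `F` is `D_F⁻¹` (type (M5)). -/
def MFIsDInv (F : Finset V) : Prop :=
  ∀ x y z : V, ({x, y, z} : Finset V) = F → x ≠ y → y ≠ z → x ≠ z →
    T.MonodromyRel F x y z x

/-- The z-monodromy of `F` is of type (M3):
`M_F = (-e₁,e₂,e₃)(-e₃,-e₂,e₁)` for a cycle `(e₁,e₂,e₃)` of `D_F`. -/
def MFIsM3 (F : Finset V) : Prop :=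
  ∃ x y z : V, ({x, y, z} : Finset V) = F ∧ x ≠ y ∧ y ≠ z ∧ x ≠ z ∧
    T.MonodromyRel F y x y z ∧ T.MonodromyRel F y z z x ∧
    T.MonodromyRel F z x y x ∧ T.MonodromyRel F x z z y ∧
    T.MonodromyRel F z y x y ∧ T.MonodromyRel F x y x z

/-- The z-monodromy of `F` is of type (M4):
`M_F = (e₁,-e₂)(e₂,-e₁)` with `e₃, -e₃` fixed, for a cycle `(e₁,e₂,e₃)`
of `D_F`. -/
def MFIsM4 (F : Finset V) : Prop :=
  ∃ x y z : V, ({x, y, z} : Finset V) = F ∧ x ≠ y ∧ y ≠ z ∧ x ≠ z ∧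
    T.MonodromyRel F x y z y ∧ T.MonodromyRel F z y x y ∧
    T.MonodromyRel F y z y x ∧ T.MonodromyRel F y x y z ∧
    T.MonodromyRel F z x z x ∧ T.MonodromyRel F x z x z

/-- The dual graph: vertices are faces, adjacent iff they share an edge. -/
def dualGraph : SimpleGraph {F : Finset V // F ∈ T.faces} where
  Adj A B := A ≠ B ∧ ((A : Finset V) ∩ (B : Finset V)).card = 2
  symm := by
    constructor
    intro A B h
    exact ⟨h.1.symm, by rw [Finset.inter_comm]; exact h.2⟩
  loopless := by constructor; intro A h; exact h.1 rfl

end Triangulation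

namespace Triangulation

variable {V : Type} [Fintype V] [DecidableEq V] {T : Triangulation V}

lemma pair_mem_subset {a b : V} {F : Finset V} (ha : a ∈ F) (hb : b ∈ F) :
    ({a, b} : Finset V) ⊆ F := by
  simp [Finset.insert_subset_iff, ha, hb]

lemma eq_of_two_card {s : Finset (Finset V)} (hs : s.card = 2)
    {A B B' : Finset V} (hA : A ∈ s) (hB : B ∈ s) (hB' : B' ∈ s)
    (h1 : B ≠ A) (h2 : B' ≠ A) : B = B' := by
  obtain ⟨P, Q, hPQ, rfl⟩ := Finset.card_eq_two.mp hs
  simp only [Finset.mem_insert, Finset.mem_singleton] at hA hB hB'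
  rcases hA with rfl|rfl <;> rcases hB with rfl|rfl <;> rcases hB' with rfl|rfl <;> tauto

lemma or_of_two_card {s : Finset (Finset V)} (hs : s.card = 2)
    {A B C : Finset V} (hA : A ∈ s) (hB : B ∈ s) (hC : C ∈ s)
    (hAB : A ≠ B) : C = A ∨ C = B := by
  obtain ⟨P, Q, hPQ, rfl⟩ := Finset.card_eq_two.mp hs
  simp only [Finset.mem_insert, Finset.mem_singleton] at hA hB hC
  rcases hA with rfl|rfl <;> rcases hB with rfl|rfl <;> rcases hC with rfl|rfl <;> tauto

lemma pair_of_mem {e : Finset V} {v : V} (he : e.card = 2) (hv : v ∈ e) :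
    ∃ u, u ≠ v ∧ e = {u, v} := by
  obtain ⟨a, b, hab, rfl⟩ := Finset.card_eq_two.mp he
  rcases (by simpa using hv : v = a ∨ v = b) with rfl | rfl
  · exact ⟨b, hab.symm, Finset.pair_comm _ _⟩
  · exact ⟨a, hab, rfl⟩

lemma edge_in_triangle {e F : Finset V} {x y z : V}
    (hFd : ({x, y, z} : Finset V) = F) (he : e ⊆ F) (hc : e.card = 2) :
    e = {x, y} ∨ e = {y, z} ∨ e = {x, z} := by
  obtain ⟨a, b, hab, rfl⟩ := Finset.card_eq_two.mp hc
  have ha : a ∈ F := he (by simp)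
  have hb : b ∈ F := he (by simp)
  rw [← hFd] at ha hb
  simp only [Finset.mem_insert, Finset.mem_singleton] at ha hb
  rcases ha with rfl|rfl|rfl <;> rcases hb with rfl|rfl|rfl
  · exact absurd rfl hab
  · exact Or.inl rfl
  · exact Or.inr (Or.inr rfl)
  · exact Or.inl (Finset.pair_comm _ _)
  · exact absurd rfl hab
  · exact Or.inr (Or.inl rfl)
  · exact Or.inr (Or.inr (Finset.pair_comm _ _))
  · exact Or.inr (Or.inl (Finset.pair_comm _ _))
  · exact absurd rfl hab

/-- The local transition conditions of a zigzag on a triple of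
consecutive edges. -/
def Chain (T : Triangulation V) (e₁ e₂ e₃ : Finset V) : Prop :=
  T.IsEdge e₁ ∧ T.IsEdge e₂ ∧ T.IsEdge e₃ ∧
  (e₁ ≠ e₂ ∧ (e₁ ∩ e₂).Nonempty ∧ ∃ A ∈ T.faces, e₁ ⊆ A ∧ e₂ ⊆ A) ∧
  (e₂ ≠ e₃ ∧ (e₂ ∩ e₃).Nonempty ∧ ∃ B ∈ T.faces, e₂ ⊆ B ∧ e₃ ⊆ B) ∧
  (∀ A ∈ T.faces, ∀ B ∈ T.faces, e₁ ⊆ A → e₂ ⊆ A → e₂ ⊆ B → e₃ ⊆ B → A ≠ B) ∧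
  e₁ ∩ e₃ = ∅

lemma Zigzag.chain (Z : T.Zigzag) (i : ℕ) :
    Chain T (Z.seq i) (Z.seq (i + 1)) (Z.seq (i + 2)) := by
  obtain ⟨h1, h2, h3, h4⟩ := Z.isZigzag
  exact ⟨h1 i, h1 (i + 1), h1 (i + 2), h2 i, h2 (i + 1), h3 i, h4 i⟩

lemma Chain.symm {e₁ e₂ e₃ : Finset V} (h : Chain T e₁ e₂ e₃) : Chain T e₃ e₂ e₁ := by
  obtain ⟨a, b, c, ⟨d1, d2, d3⟩, ⟨f1, f2, f3⟩, g, h'⟩ := h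
  refine ⟨c, b, a, ⟨f1.symm, by rwa [Finset.inter_comm], ?_⟩,
    ⟨d1.symm, by rwa [Finset.inter_comm], ?_⟩, ?_, by rwa [Finset.inter_comm]⟩
  · obtain ⟨B, hB, h1, h2⟩ := f3; exact ⟨B, hB, h2, h1⟩
  · obtain ⟨A, hA, h1, h2⟩ := d3; exact ⟨A, hA, h2, h1⟩
  · intro A hA B hB h1 h2 h3 h4
    exact (g B hB A hA h4 h3 h2 h1).symm

lemma chain_unique {e₁ e₂ e₃ e₃' : Finset V} (h : Chain T e₁ e₂ e₃)
    (h' : Chain T e₁ e₂ e₃') : e₃ = e₃' := by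
  obtain ⟨he₁, he₂, he₃, ⟨h12, hint, A, hAf, h1A, h2A⟩,
    ⟨h23, hint23, B, hBf, h2B, h3B⟩, hface, hdisj⟩ := h
  obtain ⟨_, _, he₃', _, ⟨h23', hint23', B', hB'f, h2B', h3B'⟩, hface', hdisj'⟩ := h'
  obtain ⟨v, hv⟩ := hint
  have hv1 : v ∈ e₁ := (Finset.mem_inter.mp hv).1
  have hv2 : v ∈ e₂ := (Finset.mem_inter.mp hv).2
  have hBA : B ≠ A := (hface A hAf B hBf h1A h2A h2B h3B).symm
  have hB'A : B' ≠ A := (hface' A hAf B' hB'f h1A h2A h2B' h3B').symm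
  have hfil := T.edge_two_faces e₂ he₂.1 ⟨A, hAf, h2A⟩
  have hBB' : B = B' := eq_of_two_card hfil (Finset.mem_filter.mpr ⟨hAf, h2A⟩)
    (Finset.mem_filter.mpr ⟨hBf, h2B⟩) (Finset.mem_filter.mpr ⟨hB'f, h2B'⟩) hBA hB'A
  have hv3 : v ∉ e₃ := fun hm => by
    have : v ∈ e₁ ∩ e₃ := Finset.mem_inter.mpr ⟨hv1, hm⟩
    simp [hdisj] at this
  have hv3' : v ∉ e₃' := fun hm => by
    have : v ∈ e₁ ∩ e₃' := Finset.mem_inter.mpr ⟨hv1, hm⟩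
    simp [hdisj'] at this
  have hvB : v ∈ B := h2B hv2
  have hBcard : B.card = 3 := T.card_eq B hBf
  have hBe : (B.erase v).card = 2 := by rw [Finset.card_erase_of_mem hvB, hBcard]
  have key : ∀ (e : Finset V), e.card = 2 → e ⊆ B → v ∉ e → e = B.erase v := by
    intro e hc hsub hvn
    apply Finset.eq_of_subset_of_card_le
    · intro t ht
      exact Finset.mem_erase.mpr ⟨fun hh => hvn (hh ▸ ht), hsub ht⟩
    · rw [hBe, hc]
  rw [key e₃ he₃.1 h3B hv3, key e₃' he₃'.1 (hBB' ▸ h3B') hv3']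

lemma chain_determined {f g : ℕ → Finset V}
    (hf : ∀ n, Chain T (f n) (f (n + 1)) (f (n + 2)))
    (hg : ∀ n, Chain T (g n) (g (n + 1)) (g (n + 2)))
    (h0 : f 0 = g 0) (h1 : f 1 = g 1) : ∀ n, f n = g n := by
  have key : ∀ n, f n = g n ∧ f (n + 1) = g (n + 1) := by
    intro n
    induction n with
    | zero => exact ⟨h0, h1⟩
    | succ k ih =>
      refine ⟨ih.2, ?_⟩
      have hc := hf k
      rw [ih.1, ih.2] at hc
      exact chain_unique hc (hg k)
  exact fun n => (key n).1

lemma seq_determined (Z W : T.Zigzag) (i j : ℕ)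
    (h0 : Z.seq i = W.seq j) (h1 : Z.seq (i + 1) = W.seq (j + 1)) :
    ∀ n, Z.seq (i + n) = W.seq (j + n) :=
  chain_determined (fun n => Z.chain (i + n)) (fun n => W.chain (j + n)) h0 h1

lemma seq_add_mul (Z : T.Zigzag) (m N : ℕ) : Z.seq (m + N * Z.period) = Z.seq m := by
  induction N with
  | zero => simp
  | succ k ih =>
    rw [show m + (k + 1) * Z.period = (m + k * Z.period) + Z.period by ring,
      Z.periodic, ih]

lemma two_le_period (Z : T.Zigzag) : 2 ≤ Z.period := by
  have h := (Z.isZigzag.2.1 0).1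
  have hp := Z.period_pos
  by_contra h2
  have hone : Z.period = 1 := by omega
  have := Z.periodic 0
  rw [hone] at this
  exact h this.symm

lemma equiv_of_match (Z Z' : T.Zigzag) {k l : ℕ}
    (h0 : Z'.seq l = Z.seq k) (h1 : Z'.seq (l + 1) = Z.seq (k + 1)) : Z.Equiv Z' := by
  have D := seq_determined Z' Z l k h0 h1
  obtain ⟨p', hp'⟩ : ∃ p', Z'.period = p' + 1 := ⟨Z'.period - 1, by
    have := Z'.period_pos; omega⟩
  refine ⟨k + l * p', fun i => ?_⟩
  have e1 := (seq_add_mul Z' i l).symm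
  rw [hp'] at e1
  rw [e1, show i + l * (p' + 1) = l + (i + l * p') by ring, D (i + l * p')]
  congr 1
  ring

lemma rev_chain (Z : T.Zigzag) (k : ℕ) :
    ∀ n, Chain T (Z.seq (k + Z.period - n % Z.period))
      (Z.seq (k + Z.period - (n + 1) % Z.period))
      (Z.seq (k + Z.period - (n + 2) % Z.period)) := by
  intro n
  have hp0 : 0 < Z.period := Z.period_pos
  have hp2 : 2 ≤ Z.period := two_le_period Z
  have hr : n % Z.period < Z.period := Nat.mod_lt _ hp0
  have hm1 : (n + 1) % Z.period = (n % Z.period + 1) % Z.period :=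
    (Nat.mod_add_mod n Z.period 1).symm
  have hm2 : (n + 2) % Z.period = (n % Z.period + 2) % Z.period :=
    (Nat.mod_add_mod n Z.period 2).symm
  rcases (by omega : n % Z.period + 2 < Z.period ∨ n % Z.period + 2 = Z.period ∨
      n % Z.period + 1 = Z.period) with hc | hc | hc
  · rw [hm1, hm2, Nat.mod_eq_of_lt (show n % Z.period + 1 < Z.period by omega),
      Nat.mod_eq_of_lt (show n % Z.period + 2 < Z.period by omega)]
    have hc' := (Z.chain (k + Z.period - (n % Z.period + 2))).symm
    rw [show k + Z.period - (n % Z.period + 2) + 2 = k + Z.period - n % Z.period by omega,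
      show k + Z.period - (n % Z.period + 2) + 1 = k + Z.period - (n % Z.period + 1) by omega]
      at hc'
    exact hc'
  · rw [hm1, hm2, Nat.mod_eq_of_lt (show n % Z.period + 1 < Z.period by omega), hc,
      Nat.mod_self]
    have hc' := (Z.chain k).symm
    rw [show k + Z.period - n % Z.period = k + 2 by omega,
      show k + Z.period - (n % Z.period + 1) = k + 1 by omega,
      show k + Z.period - 0 = k + Z.period by omega]
    rwa [show k + Z.period = k + 1 * Z.period by ring, seq_add_mul Z k 1]
  · rw [hm1, hm2, hc, Nat.mod_self, show n % Z.period + 2 = Z.period + 1 by omega,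
      Nat.add_mod_left, Nat.mod_eq_of_lt (show 1 < Z.period by omega)]
    have hc' := (Z.chain (k + Z.period - 1)).symm
    rw [show k + Z.period - 1 + 2 = (k + 1) + 1 * Z.period by omega, seq_add_mul,
      show k + Z.period - 1 + 1 = k + Z.period by omega] at hc'
    rw [show k + Z.period - n % Z.period = k + 1 by omega,
      show k + Z.period - 0 = k + Z.period by omega]
    exact hc'

lemma rev_match (Z Z' : T.Zigzag) {k l : ℕ}
    (h0 : Z'.seq l = Z.seq (k + 1)) (h1 : Z'.seq (l + 1) = Z.seq k) :
    ∀ n, Z'.seq (l + n) = Z.seq (k + 1 + Z.period - n % Z.period) := by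
  have hp2 : 2 ≤ Z.period := two_le_period Z
  apply chain_determined (fun n => Z'.chain (l + n)) (rev_chain Z (k + 1))
  · rw [Nat.zero_mod, Nat.sub_zero, show k + 1 + Z.period = (k + 1) + 1 * Z.period by ring,
      seq_add_mul]
    exact h0
  · rw [Nat.mod_eq_of_lt (by omega : 1 < Z.period),
      show k + 1 + Z.period - 1 = k + 1 * Z.period by omega, seq_add_mul]
    exact h1

lemma period_le_of_revmatch (Z Z' : T.Zigzag) {k l : ℕ}
    (h0 : Z'.seq l = Z.seq (k + 1)) (h1 : Z'.seq (l + 1) = Z.seq k) :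
    Z'.period ≤ Z.period := by
  have D := rev_match Z Z' h0 h1
  apply Z'.period_min _ Z.period_pos
  intro m
  obtain ⟨q, hq⟩ : ∃ q, Z'.period = q + 1 := ⟨Z'.period - 1, by
    have := Z'.period_pos; omega⟩
  have hM : l ≤ l * Z'.period := by
    rw [hq]; have : l * 1 ≤ l * (q + 1) := Nat.mul_le_mul_left l (by omega); simpa using this
  have e0 := seq_add_mul Z' (m + Z.period) l
  have e0' := seq_add_mul Z' m l
  have key : ∀ n, Z'.seq (l + n + Z.period) = Z'.seq (l + n) := by
    intro n
    have E1 := D (n + Z.period)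
    have E2 := D n
    rw [show l + n + Z.period = l + (n + Z.period) by omega, E1, E2, Nat.add_mod_right]
  have hthis := key (m + l * Z'.period - l)
  rw [show l + (m + l * Z'.period - l) = m + l * Z'.period by omega,
    show m + l * Z'.period + Z.period = m + Z.period + l * Z'.period by omega] at hthis
  rw [← e0, ← e0']
  exact hthis

lemma reverse_of_match (Z Z' : T.Zigzag) {k l : ℕ}
    (h0 : Z'.seq l = Z.seq (k + 1)) (h1 : Z'.seq (l + 1) = Z.seq k) :
    Z'.IsReverseOf Z := by
  have hpp : Z'.period = Z.period :=
    le_antisymm (period_le_of_revmatch Z Z' h0 h1) (period_le_of_revmatch Z' Z h1.symm h0.symm)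
  have D := rev_match Z Z' h0 h1
  have hp2 : 2 ≤ Z.period := two_le_period Z
  obtain ⟨p0, hp0⟩ : ∃ p0, Z.period = p0 + 1 := ⟨Z.period - 1, by omega⟩
  have hd : (l * p0) % Z.period < Z.period := Nat.mod_lt _ (by omega)
  refine ⟨k + 1 + (Z.period - (l * p0) % Z.period), fun i => ?_⟩
  have e0 := (seq_add_mul Z' i l).symm
  rw [hpp] at e0
  rw [e0, show i + l * Z.period = l + (i + l * p0) by rw [hp0]; ring, D (i + l * p0)]
  have hu : i % Z.period < Z.period := Nat.mod_lt _ (by omega)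
  have hmod : (i + l * p0) % Z.period = (i % Z.period + (l * p0) % Z.period) % Z.period :=
    Nat.add_mod _ _ _
  rw [hmod]
  rcases lt_or_ge (i % Z.period + (l * p0) % Z.period) Z.period with hcase | hcase
  · rw [Nat.mod_eq_of_lt hcase,
      show k + 1 + (Z.period - (l * p0) % Z.period) + Z.period - i % Z.period
        = (k + 1 + Z.period - (i % Z.period + (l * p0) % Z.period)) + Z.period by omega,
      Z.periodic]
  · rw [Nat.mod_eq_sub_mod hcase, Nat.mod_eq_of_lt (by omega)]
    congr 1
    omega

lemma pass_of_edge (Z : T.Zigzag) (kk : ℕ) :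
    ∃ u v, u ∈ Z.seq kk ∧ v ∈ Z.seq kk ∧ Z.Passes kk u v := by
  have he := Z.isZigzag.1 kk
  have hadj := Z.isZigzag.2.1 kk
  obtain ⟨v, hv⟩ := hadj.2.1
  have hv1 : v ∈ Z.seq kk := (Finset.mem_inter.mp hv).1
  have hv2 : v ∈ Z.seq (kk + 1) := (Finset.mem_inter.mp hv).2
  obtain ⟨u, huv, hEq⟩ := pair_of_mem he.1 hv1
  exact ⟨u, v, by rw [hEq]; simp, hv1, hEq, huv, hv2⟩

lemma next_pass {F : Finset V} (hD : T.MFIsD F) (Z : T.Zigzag) {i : ℕ} {a b c : V}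
    (hab : a ≠ b) (hbc : b ≠ c) (hac : a ≠ c)
    (hFd : ({a, b, c} : Finset V) = F)
    (h0 : Z.seq i = {a, c}) (h1 : Z.seq (i + 1) = {c, b}) :
    ∃ q, i + 1 < q ∧ Z.seq q = {b, a} ∧ a ∈ Z.seq (q + 1) ∧
      ∀ k, i + 1 < k → k < q → ¬ (Z.seq k ⊆ F) := by
  have hF' : ({c, b, a} : Finset V) = F := by
    rw [← hFd]; ext t; simp; tauto
  have hM := hD c b a hF' hbc.symm hab.symm hac.symm
  obtain ⟨hcF, hbF, W, i₀, j₀, ⟨z', hz'F, hz'c, hz'b, hPz⟩, hP1, hij, hPj, huF, hvF, hbet⟩ := hM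
  have hz'a : z' = a := by
    rw [← hFd] at hz'F
    simp only [Finset.mem_insert, Finset.mem_singleton] at hz'F
    tauto
  subst hz'a
  have hW0 : W.seq i₀ = Z.seq i := by rw [hPz.1, h0]
  have hW1 : W.seq (i₀ + 1) = Z.seq (i + 1) := by rw [hP1.1, h1]
  have D := seq_determined W Z i₀ i hW0 hW1
  refine ⟨i + (j₀ - i₀), by omega, ?_, ?_, ?_⟩
  · have := D (j₀ - i₀)
    rw [show i₀ + (j₀ - i₀) = j₀ by omega] at this
    rw [← this, hPj.1]
  · have := D (j₀ - i₀ + 1)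
    rw [show i₀ + (j₀ - i₀ + 1) = j₀ + 1 by omega] at this
    rw [show i + (j₀ - i₀) + 1 = i + (j₀ - i₀ + 1) by omega, ← this]
    exact hPj.2.2
  · intro k hk1 hk2 hsub
    obtain ⟨u, v, hu, hv, hP⟩ := pass_of_edge Z k
    have e1 := D (k - i)
    rw [show i + (k - i) = k by omega] at e1
    have e2 := D (k - i + 1)
    rw [show i + (k - i + 1) = k + 1 by omega] at e2
    refine hbet (i₀ + (k - i)) (by omega) (by omega) u v (hsub hu) (hsub hv) ?_
    refine ⟨by rw [e1]; exact hP.1, hP.2.1, ?_⟩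
    rw [show i₀ + (k - i) + 1 = i₀ + (k - i + 1) by omega, e2]
    exact hP.2.2

lemma next_shadow {F : Finset V} (hD : T.MFIsD F) (hFf : F ∈ T.faces) (Z : T.Zigzag)
    {i : ℕ} {a b c : V} (hab : a ≠ b) (hbc : b ≠ c) (hac : a ≠ c)
    (hFd : ({a, b, c} : Finset V) = F)
    (h0 : Z.seq i = {a, c}) (h1 : Z.seq (i + 1) = {c, b}) :
    ∃ q, i + 3 ≤ q ∧ Z.seq q = {b, a} ∧ Z.seq (q + 1) = {a, c} ∧
      ∀ k, i + 1 < k → k < q → ¬ (Z.seq k ⊆ F) := by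
  have haF : a ∈ F := by rw [← hFd]; simp
  have hbF : b ∈ F := by rw [← hFd]; simp
  have hcF : c ∈ F := by rw [← hFd]; simp
  obtain ⟨q, hq, hq0, hq1, hbet⟩ := next_pass hD Z hab hbc hac hFd h0 h1
  have hq3 : i + 3 ≤ q := by
    rcases Nat.lt_or_ge q (i + 3) with h | h
    · exfalso
      have hqe : q = i + 2 := by omega
      have hdis := Z.isZigzag.2.2.2 i
      have ha1 : a ∈ Z.seq i := by rw [h0]; simp
      rw [hqe] at hq0
      have ha2 : a ∈ Z.seq (i + 2) := by rw [hq0]; simp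
      have : a ∈ Z.seq i ∩ Z.seq (i + 2) := Finset.mem_inter.mpr ⟨ha1, ha2⟩
      simp [hdis] at this
    · exact h
  obtain ⟨q', rfl⟩ : ∃ q', q = q' + 1 := ⟨q - 1, by omega⟩
  obtain ⟨hne', hint', A, hAf, hA1, hA2⟩ := Z.isZigzag.2.1 q'
  obtain ⟨hneq, hintq, B, hBf, hB1, hB2⟩ := Z.isZigzag.2.1 (q' + 1)
  have hABne : A ≠ B := Z.isZigzag.2.2.1 q' A hAf B hBf hA1 hA2 hB1 hB2
  have hfe : T.IsEdge (Z.seq (q' + 1)) := Z.isZigzag.1 _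
  have hcard2 := T.edge_two_faces (Z.seq (q' + 1)) hfe.1 hfe.2
  have hFmem : F ∈ T.faces.filter fun G => Z.seq (q' + 1) ⊆ G := by
    refine Finset.mem_filter.mpr ⟨hFf, ?_⟩
    rw [hq0]
    exact pair_mem_subset hbF haF
  have hAmem := Finset.mem_filter.mpr ⟨hAf, hA2⟩
  have hBmem := Finset.mem_filter.mpr ⟨hBf, hB1⟩
  rcases or_of_two_card hcard2 hAmem hBmem hFmem hABne with hFA | hFB
  · exfalso
    rw [← hFA] at hA1
    exact hbet q' (by omega) (by omega) hA1
  · rw [← hFB] at hB2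
    have hc2 : (Z.seq (q' + 2)).card = 2 := (Z.isZigzag.1 _).1
    rcases edge_in_triangle hFd hB2 hc2 with h | h | h
    · exact absurd (by rw [hq0, h, Finset.pair_comm]) hneq
    · exfalso
      rw [h] at hq1
      simp only [Finset.mem_insert, Finset.mem_singleton] at hq1
      tauto
    · exact ⟨q' + 1, hq3, hq0, h, hbet⟩

lemma period_structure {F : Finset V} (hD : T.MFIsD F) (hFf : F ∈ T.faces) (Z : T.Zigzag)
    {i : ℕ} {a b c : V} (hab : a ≠ b) (hbc : b ≠ c) (hac : a ≠ c)
    (hFd : ({a, b, c} : Finset V) = F)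
    (h0 : Z.seq i = {a, c}) (h1 : Z.seq (i + 1) = {c, b}) :
    ∃ q₁ q₂, i + 3 ≤ q₁ ∧ q₁ + 3 ≤ q₂ ∧ q₂ + 3 ≤ i + Z.period ∧
      Z.seq q₁ = {b, a} ∧ Z.seq (q₁ + 1) = {a, c} ∧
      Z.seq q₂ = {c, b} ∧ Z.seq (q₂ + 1) = {b, a} ∧
      (∀ k, i + 1 < k → k < q₁ → ¬ (Z.seq k ⊆ F)) ∧
      (∀ k, q₁ + 1 < k → k < q₂ → ¬ (Z.seq k ⊆ F)) ∧
      (∀ k, q₂ + 1 < k → k < i + Z.period → ¬ (Z.seq k ⊆ F)) := by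
  have haF : a ∈ F := by rw [← hFd]; simp
  have hbF : b ∈ F := by rw [← hFd]; simp
  have hcF : c ∈ F := by rw [← hFd]; simp
  have hFd2 : ({b, c, a} : Finset V) = F := by rw [← hFd]; ext t; simp; tauto
  have hFd3 : ({c, a, b} : Finset V) = F := by rw [← hFd]; ext t; simp; tauto
  obtain ⟨q₁, hq₁3, hq₁0, hq₁1, hbet₁⟩ := next_shadow hD hFf Z hab hbc hac hFd h0 h1
  obtain ⟨q₂, hq₂3, hq₂0, hq₂1, hbet₂⟩ :=
    next_shadow hD hFf Z hbc hac.symm hab.symm hFd2 hq₁0 hq₁1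
  obtain ⟨q₃, hq₃3, hq₃0, hq₃1, hbet₃⟩ :=
    next_shadow hD hFf Z hac.symm hab hbc.symm hFd3 hq₂0 hq₂1
  have D := seq_determined Z Z q₃ i (by rw [hq₃0, h0]) (by rw [hq₃1, h1])
  have hip : i ≤ i * Z.period := by
    obtain ⟨p0, hp0⟩ : ∃ p0, Z.period = p0 + 1 := ⟨Z.period - 1, by
      have := Z.period_pos; omega⟩
    have : i * Z.period = i * p0 + i := by rw [hp0]; ring
    omega
  have hper : ∀ m, Z.seq (m + (q₃ - i)) = Z.seq m := by
    intro m
    have h1' := (seq_add_mul Z (m + (q₃ - i)) i).symm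
    have h2' := D (m + i * Z.period - i)
    rw [show q₃ + (m + i * Z.period - i) = m + (q₃ - i) + i * Z.period by omega,
      show i + (m + i * Z.period - i) = m + i * Z.period by omega] at h2'
    rw [h1', h2', seq_add_mul]
  have hple : Z.period ≤ q₃ - i := Z.period_min _ (by omega) hper
  have hp2 : 2 ≤ Z.period := two_le_period Z
  have hvalP : Z.seq (i + Z.period) = {a, c} := by rw [Z.periodic i, h0]
  have hPle : i + Z.period ≤ q₃ := by omega
  have hPq₃ : i + Z.period = q₃ := by
    rcases (by omega : (i + 1 < i + Z.period ∧ i + Z.period < q₁) ∨ i + Z.period = q₁ ∨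
        i + Z.period = q₁ + 1 ∨ (q₁ + 1 < i + Z.period ∧ i + Z.period < q₂) ∨
        i + Z.period = q₂ ∨ i + Z.period = q₂ + 1 ∨
        (q₂ + 1 < i + Z.period ∧ i + Z.period < q₃) ∨ i + Z.period = q₃) with
      ⟨hu, hv⟩ | hcs | hcs | ⟨hu, hv⟩ | hcs | hcs | ⟨hu, hv⟩ | hcs
    · exact absurd (by rw [hvalP]; exact pair_mem_subset haF hcF) (hbet₁ _ hu hv)
    · exfalso
      rw [hcs, hq₁0] at hvalP
      have : c ∈ ({b, a} : Finset V) := by rw [hvalP]; simp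
      simp only [Finset.mem_insert, Finset.mem_singleton] at this
      tauto
    · exfalso
      have hv2 : Z.seq (i + Z.period + 1) = {c, b} := by
        rw [show i + Z.period + 1 = (i + 1) + Z.period by omega, Z.periodic, h1]
      rw [hcs] at hv2
      have hdis := Z.isZigzag.2.2.2 q₁
      have hb1 : b ∈ Z.seq q₁ := by rw [hq₁0]; simp
      have hb2 : b ∈ Z.seq (q₁ + 2) := by
        rw [show q₁ + 2 = q₁ + 1 + 1 from rfl, hv2]; simp
      have : b ∈ Z.seq q₁ ∩ Z.seq (q₁ + 2) := Finset.mem_inter.mpr ⟨hb1, hb2⟩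
      simp [hdis] at this
    · exact absurd (by rw [hvalP]; exact pair_mem_subset haF hcF) (hbet₂ _ hu hv)
    · exfalso
      rw [hcs, hq₂0] at hvalP
      have : a ∈ ({a, c} : Finset V) := by simp
      rw [← hvalP] at this
      simp only [Finset.mem_insert, Finset.mem_singleton] at this
      tauto
    · exfalso
      have hv2 : Z.seq (i + Z.period + 1) = {c, b} := by
        rw [show i + Z.period + 1 = (i + 1) + Z.period by omega, Z.periodic, h1]
      rw [hcs] at hv2
      have hdis := Z.isZigzag.2.2.2 q₂
      have hc1 : c ∈ Z.seq q₂ := by rw [hq₂0]; simp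
      have hc2 : c ∈ Z.seq (q₂ + 2) := by
        rw [show q₂ + 2 = q₂ + 1 + 1 from rfl, hv2]; simp
      have : c ∈ Z.seq q₂ ∩ Z.seq (q₂ + 2) := Finset.mem_inter.mpr ⟨hc1, hc2⟩
      simp [hdis] at this
    · exact absurd (by rw [hvalP]; exact pair_mem_subset haF hcF) (hbet₃ _ hu hv)
    · exact hcs
  exact ⟨q₁, q₂, hq₁3, hq₂3, by omega, hq₁0, hq₁1, hq₂0, hq₂1, hbet₁, hbet₂,
    fun k hk1 hk2 => hbet₃ k hk1 (by omega)⟩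

end Triangulation

/-- if `F, F'` are adjacent faces whose z-monodromies are
`D_F` and `D_{F'}` respectively, then there is a unique (up to reversal)
zigzag whose face shadow contains `F` and `F'`, and in its face shadow the
occurrences of `F` and `F'` alternate. -/
theorem adjacent_M2_faces_shadow {V : Type} [Fintype V] [DecidableEq V]
    (T : Triangulation V) (F F' : Finset V)
    (hF : F ∈ T.faces) (hF' : F' ∈ T.faces) (hne : F ≠ F')
    (hadj : (F ∩ F').card = 2)
    (h2 : T.MFIsD F) (h2' : T.MFIsD F') :
    ∃ Z : T.Zigzag, ∃ a₁ a₂ a₃ b₁ b₂ b₃ : ℕ,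
      a₁ < b₁ ∧ b₁ < a₂ ∧ a₂ < b₂ ∧ b₂ < a₃ ∧ a₃ < b₃ ∧ b₃ < a₁ + Z.period ∧
      Z.ShadowAt a₁ F ∧ Z.ShadowAt a₂ F ∧ Z.ShadowAt a₃ F ∧
      Z.ShadowAt b₁ F' ∧ Z.ShadowAt b₂ F' ∧ Z.ShadowAt b₃ F' ∧
      (∀ i, a₁ ≤ i → i < a₁ + Z.period → Z.ShadowAt i F →
        i = a₁ ∨ i = a₂ ∨ i = a₃) ∧
      (∀ i, a₁ ≤ i → i < a₁ + Z.period → Z.ShadowAt i F' →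
        i = b₁ ∨ i = b₂ ∨ i = b₃) ∧
      (∀ Z' : T.Zigzag, (∃ i, Z'.ShadowAt i F) → (∃ j, Z'.ShadowAt j F') →
        Z.Equiv Z' ∨ Z'.IsReverseOf Z) := by
  classical
  obtain ⟨x, y, hxy, hIxy⟩ := Finset.card_eq_two.mp hadj
  have hxF : x ∈ F := by
    have : x ∈ F ∩ F' := by rw [hIxy]; simp
    exact (Finset.mem_inter.mp this).1
  have hxF' : x ∈ F' := by
    have : x ∈ F ∩ F' := by rw [hIxy]; simp
    exact (Finset.mem_inter.mp this).2
  have hyF : y ∈ F := by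
    have : y ∈ F ∩ F' := by rw [hIxy]; simp
    exact (Finset.mem_inter.mp this).1
  have hyF' : y ∈ F' := by
    have : y ∈ F ∩ F' := by rw [hIxy]; simp
    exact (Finset.mem_inter.mp this).2
  have hFcard := T.card_eq F hF
  have hF'card := T.card_eq F' hF'
  have hxysubF : ({x, y} : Finset V) ⊆ F := Triangulation.pair_mem_subset hxF hyF
  have hxysubF' : ({x, y} : Finset V) ⊆ F' := Triangulation.pair_mem_subset hxF' hyF'
  have hsd : (F \ {x, y}).card = 1 := by
    rw [Finset.card_sdiff_of_subset hxysubF, hFcard, Finset.card_pair hxy]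
  obtain ⟨z, hz⟩ := Finset.card_eq_one.mp hsd
  have hzmem : z ∈ F \ {x, y} := by rw [hz]; simp
  have hzF : z ∈ F := (Finset.mem_sdiff.mp hzmem).1
  have hzx : z ≠ x := by
    have := (Finset.mem_sdiff.mp hzmem).2; simp at this; tauto
  have hzy : z ≠ y := by
    have := (Finset.mem_sdiff.mp hzmem).2; simp at this; tauto
  have hsd' : (F' \ {x, y}).card = 1 := by
    rw [Finset.card_sdiff_of_subset hxysubF', hF'card, Finset.card_pair hxy]
  obtain ⟨w, hw⟩ := Finset.card_eq_one.mp hsd'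
  have hwmem : w ∈ F' \ {x, y} := by rw [hw]; simp
  have hwF' : w ∈ F' := (Finset.mem_sdiff.mp hwmem).1
  have hwx : w ≠ x := by
    have := (Finset.mem_sdiff.mp hwmem).2; simp at this; tauto
  have hwy : w ≠ y := by
    have := (Finset.mem_sdiff.mp hwmem).2; simp at this; tauto
  have hzF' : z ∉ F' := by
    intro h
    have : z ∈ F ∩ F' := Finset.mem_inter.mpr ⟨hzF, h⟩
    rw [hIxy] at this; simp at this; tauto
  have hwF : w ∉ F := by
    intro h
    have : w ∈ F ∩ F' := Finset.mem_inter.mpr ⟨h, hwF'⟩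
    rw [hIxy] at this; simp at this; tauto
  have hFxyz : ({x, y, z} : Finset V) = F := by
    apply Finset.eq_of_subset_of_card_le
    · intro t ht
      simp only [Finset.mem_insert, Finset.mem_singleton] at ht
      rcases ht with rfl | rfl | rfl
      exacts [hxF, hyF, hzF]
    · rw [hFcard, Finset.card_insert_of_notMem (by simp [hxy, Ne.symm hzx]),
        Finset.card_pair (Ne.symm hzy)]
  have hF'xyw : ({x, y, w} : Finset V) = F' := by
    apply Finset.eq_of_subset_of_card_le
    · intro t ht
      simp only [Finset.mem_insert, Finset.mem_singleton] at ht
      rcases ht with rfl | rfl | rfl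
      exacts [hxF', hyF', hwF']
    · rw [hF'card, Finset.card_insert_of_notMem (by simp [hxy, Ne.symm hwx]),
        Finset.card_pair (Ne.symm hwy)]
  -- the zigzag through the shared edge
  obtain ⟨-, -, Z, i, j, ⟨z', hz'F, hz'x, hz'y, hPz⟩, hPxy, -, -, -, -, -⟩ :=
    h2 x y z hFxyz hxy (Ne.symm hzy) (Ne.symm hzx)
  have hz'z : z' = z := by
    rw [← hFxyz] at hz'F
    simp only [Finset.mem_insert, Finset.mem_singleton] at hz'F
    tauto
  subst hz'z
  have h0 : Z.seq i = {z', x} := hPz.1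
  have h1 : Z.seq (i + 1) = {x, y} := hPxy.1
  -- identify the edge after the shared edge
  obtain ⟨hne12, hint12, B, hBf, hB1, hB2⟩ := Z.isZigzag.2.1 (i + 1)
  have hfilxy := T.edge_two_faces {x, y} (Finset.card_pair hxy) ⟨F, hF, hxysubF⟩
  have hBne : F ≠ B := Z.isZigzag.2.2.1 i F hF B hBf
    (by rw [h0]; exact Triangulation.pair_mem_subset hzF hxF)
    (by rw [h1]; exact hxysubF) (hB1) hB2
  have hBF' : B = F' := by
    rcases Triangulation.or_of_two_card hfilxy (Finset.mem_filter.mpr ⟨hF, hxysubF⟩)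
        (Finset.mem_filter.mpr ⟨hF', hxysubF'⟩)
        (Finset.mem_filter.mpr ⟨hBf, by rw [← h1]; exact hB1⟩) hne with h | h
    · exact (hBne h.symm).elim
    · exact h
  have h2sub : Z.seq (i + 2) ⊆ F' := hBF' ▸ hB2
  have h2v : Z.seq (i + 2) = {y, w} := by
    have hc2 : (Z.seq (i + 2)).card = 2 := (Z.isZigzag.1 _).1
    rcases Triangulation.edge_in_triangle hF'xyw h2sub hc2 with h | h | h
    · exact absurd (h1.trans h.symm) hne12
    · exact h
    · exfalso
      have hdis := Z.isZigzag.2.2.2 i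
      have hx2 : x ∈ Z.seq (i + 2) := by rw [h]; simp
      have hx0 : x ∈ Z.seq i := by rw [h0]; simp
      have : x ∈ Z.seq i ∩ Z.seq (i + 2) := Finset.mem_inter.mpr ⟨hx0, hx2⟩
      simp [hdis] at this
  -- period structure for F (pattern a=z', b=y, c=x)
  have hFdF : ({z', y, x} : Finset V) = F := by rw [← hFxyz]; ext t; simp; tauto
  obtain ⟨q₁, q₂, hq₁3, hq₂3, hq₂p, hq₁v, hq₁v1, hq₂v, hq₂v1, hbet₁, hbet₂, hbet₃⟩ :=
    Triangulation.period_structure h2 hF Z hzy (Ne.symm hxy) hzx hFdF h0 h1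
  -- period structure for F' (pattern a=x, b=w, c=y) starting at i+1
  have hFdF' : ({x, w, y} : Finset V) = F' := by rw [← hF'xyw]; ext t; simp; tauto
  obtain ⟨r₁, r₂, hr₁3, hr₂3, hr₂p, hr₁v, hr₁v1, hr₂v, hr₂v1, hbet₁', hbet₂', hbet₃'⟩ :=
    Triangulation.period_structure h2' hF' Z (Ne.symm hwx) hwy hxy hFdF' h1 h2v
  -- alignment: r₁ + 1 = q₂
  have hsubr : Z.seq (r₁ + 1) ⊆ F := by rw [hr₁v1]; exact hxysubF
  have halign : r₁ + 1 = q₂ := by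
    have h5 : r₁ + 1 = q₁ ∨ r₁ + 1 = q₁ + 1 ∨ r₁ + 1 = q₂ ∨ r₁ + 1 = q₂ + 1 ∨
        r₁ + 1 = i + Z.period := by
      by_contra hcon
      push_neg at hcon
      obtain ⟨n1, n2, n3, n4, n5⟩ := hcon
      rcases (by omega : (i + 1 < r₁ + 1 ∧ r₁ + 1 < q₁) ∨ (q₁ + 1 < r₁ + 1 ∧ r₁ + 1 < q₂) ∨
          (q₂ + 1 < r₁ + 1 ∧ r₁ + 1 < i + Z.period)) with ⟨u, v⟩ | ⟨u, v⟩ | ⟨u, v⟩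
      exacts [hbet₁ _ u v hsubr, hbet₂ _ u v hsubr, hbet₃ _ u v hsubr]
    rcases h5 with hcs | hcs | hcs | hcs | hcs
    · exfalso
      have hEq : ({x, y} : Finset V) = {y, z'} := by rw [← hr₁v1, hcs]; exact hq₁v
      have : x ∈ ({y, z'} : Finset V) := by rw [← hEq]; simp
      simp only [Finset.mem_insert, Finset.mem_singleton] at this
      rcases this with h | h
      exacts [hxy h, hzx h.symm]
    · exfalso
      have hEq : ({x, y} : Finset V) = {z', x} := by rw [← hr₁v1, hcs]; exact hq₁v1
      have : y ∈ ({z', x} : Finset V) := by rw [← hEq]; simp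
      simp only [Finset.mem_insert, Finset.mem_singleton] at this
      rcases this with h | h
      exacts [hzy h.symm, hxy h.symm]
    · exact hcs
    · exfalso
      have hEq : ({x, y} : Finset V) = {y, z'} := by rw [← hr₁v1, hcs]; exact hq₂v1
      have : x ∈ ({y, z'} : Finset V) := by rw [← hEq]; simp
      simp only [Finset.mem_insert, Finset.mem_singleton] at this
      rcases this with h | h
      exacts [hxy h, hzx h.symm]
    · exfalso
      have hEq : ({x, y} : Finset V) = {z', x} := by
        rw [← hr₁v1, hcs, Z.periodic i]; exact h0
      have : y ∈ ({z', x} : Finset V) := by rw [← hEq]; simp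
      simp only [Finset.mem_insert, Finset.mem_singleton] at this
      rcases this with h | h
      exacts [hzy h.symm, hxy h.symm]
  -- the six shadows
  have hSa₁ : Z.ShadowAt i F := ⟨hF, by rw [h0]; exact Triangulation.pair_mem_subset hzF hxF,
    by rw [h1]; exact hxysubF⟩
  have hSa₂ : Z.ShadowAt q₁ F := ⟨hF,
    by rw [hq₁v]; exact Triangulation.pair_mem_subset hyF hzF,
    by rw [hq₁v1]; exact Triangulation.pair_mem_subset hzF hxF⟩
  have hSa₃ : Z.ShadowAt q₂ F := ⟨hF, by rw [hq₂v]; exact hxysubF,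
    by rw [hq₂v1]; exact Triangulation.pair_mem_subset hyF hzF⟩
  have hSb₁ : Z.ShadowAt (i + 1) F' := ⟨hF', by rw [h1]; exact hxysubF',
    by show Z.seq (i + 2) ⊆ F'; rw [h2v]; exact Triangulation.pair_mem_subset hyF' hwF'⟩
  have hSb₂ : Z.ShadowAt r₁ F' := ⟨hF',
    by rw [hr₁v]; exact Triangulation.pair_mem_subset hwF' hxF',
    by rw [hr₁v1]; exact hxysubF'⟩
  have hSb₃ : Z.ShadowAt r₂ F' := ⟨hF',
    by rw [hr₂v]; exact Triangulation.pair_mem_subset hyF' hwF',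
    by rw [hr₂v1]; exact Triangulation.pair_mem_subset hwF' hxF'⟩
  -- classification of the F-shadows
  have hclassF : ∀ k, i ≤ k → k < i + Z.period → Z.ShadowAt k F →
      k = i ∨ k = q₁ ∨ k = q₂ := by
    intro k hk1 hk2 hsh
    obtain ⟨-, hs1, hs2⟩ := hsh
    by_contra hcon
    push_neg at hcon
    obtain ⟨n1, n2, n3⟩ := hcon
    rcases (by omega : k = i + 1 ∨ (i + 1 < k ∧ k < q₁) ∨ k = q₁ + 1 ∨
        (q₁ + 1 < k ∧ k < q₂) ∨ k = q₂ + 1 ∨ (q₂ + 1 < k ∧ k < i + Z.period)) with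
      hcs | ⟨u, v⟩ | hcs | ⟨u, v⟩ | hcs | ⟨u, v⟩
    · rw [hcs] at hs2; exact hbet₁ (i + 1 + 1) (by omega) (by omega) hs2
    · exact hbet₁ k u v hs1
    · rw [hcs] at hs2; exact hbet₂ (q₁ + 1 + 1) (by omega) (by omega) hs2
    · exact hbet₂ k u v hs1
    · rw [hcs] at hs2; exact hbet₃ (q₂ + 1 + 1) (by omega) (by omega) hs2
    · exact hbet₃ k u v hs1
  -- classification of the F'-shadows
  have hclassF' : ∀ k, i ≤ k → k < i + Z.period → Z.ShadowAt k F' →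
      k = i + 1 ∨ k = r₁ ∨ k = r₂ := by
    intro k hk1 hk2 hsh
    obtain ⟨-, hs1, hs2⟩ := hsh
    by_contra hcon
    push_neg at hcon
    obtain ⟨n1, n2, n3⟩ := hcon
    rcases (by omega : k = i ∨ k = i + 2 ∨ (i + 2 < k ∧ k < r₁) ∨ k = r₁ + 1 ∨
        (r₁ + 1 < k ∧ k < r₂) ∨ k = r₂ + 1 ∨ (r₂ + 1 < k ∧ k < i + 1 + Z.period)) with
      hcs | hcs | ⟨u, v⟩ | hcs | ⟨u, v⟩ | hcs | ⟨u, v⟩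
    · rw [hcs, h0] at hs1
      exact hzF' (hs1 (by simp))
    · rw [hcs] at hs2; exact hbet₁' (i + 2 + 1) (by omega) (by omega) hs2
    · exact hbet₁' k u v hs1
    · rw [hcs] at hs2; exact hbet₂' (r₁ + 1 + 1) (by omega) (by omega) hs2
    · exact hbet₂' k u v hs1
    · rw [hcs] at hs2; exact hbet₃' (r₂ + 1 + 1) (by omega) (by omega) hs2
    · exact hbet₃' k u v hs1
  -- uniqueness up to reversal
  have huniq : ∀ Z' : T.Zigzag, (∃ i', Z'.ShadowAt i' F) → (∃ j', Z'.ShadowAt j' F') →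
      Z.Equiv Z' ∨ Z'.IsReverseOf Z := by
    rintro Z' ⟨jj, hsh⟩ -
    obtain ⟨-, hs1, hs2⟩ := hsh
    have hc1 : (Z'.seq jj).card = 2 := (Z'.isZigzag.1 jj).1
    have hc2 : (Z'.seq (jj + 1)).card = 2 := (Z'.isZigzag.1 (jj + 1)).1
    have hnej : Z'.seq jj ≠ Z'.seq (jj + 1) := (Z'.isZigzag.2.1 jj).1
    rcases Triangulation.edge_in_triangle hFxyz hs1 hc1 with e1 | e1 | e1 <;>
      rcases Triangulation.edge_in_triangle hFxyz hs2 hc2 with e2 | e2 | e2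
    · exact absurd (e1.trans e2.symm) hnej
    · exact Or.inl (Triangulation.equiv_of_match Z Z' (k := q₂)
        (by rw [e1, hq₂v]) (by rw [e2, hq₂v1]))
    · exact Or.inr (Triangulation.reverse_of_match Z Z' (k := i)
        (by rw [e1, h1]) (by rw [e2, h0, Finset.pair_comm z' x]))
    · exact Or.inr (Triangulation.reverse_of_match Z Z' (k := q₂)
        (by rw [e1, hq₂v1]) (by rw [e2, hq₂v]))
    · exact absurd (e1.trans e2.symm) hnej
    · exact Or.inl (Triangulation.equiv_of_match Z Z' (k := q₁)
        (by rw [e1, hq₁v]) (by rw [e2, hq₁v1, Finset.pair_comm z' x]))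
    · exact Or.inl (Triangulation.equiv_of_match Z Z' (k := i)
        (by rw [e1, h0, Finset.pair_comm z' x]) (by rw [e2, h1]))
    · exact Or.inr (Triangulation.reverse_of_match Z Z' (k := q₁)
        (by rw [e1, hq₁v1, Finset.pair_comm z' x]) (by rw [e2, hq₁v]))
    · exact absurd (e1.trans e2.symm) hnej
  exact ⟨Z, i, q₁, q₂, i + 1, r₁, r₂, by omega, by omega, by omega, by omega, by omega,
    by omega, hSa₁, hSa₂, hSa₃, hSb₁, hSb₂, hSb₃, hclassF, hclassF', huniq⟩
end

section
/- Every triangulation of a connected closed surface contains a face whose z-monodromy is not the identity. -/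
open Finset

section ZMAux

open Finset

variable {V : Type} [Fintype V] [DecidableEq V] {T : Triangulation V}

lemma zz_card (Z : T.Zigzag) (i : ℕ) : (Z.seq i).card = 2 := (Z.isZigzag.1 i).1

lemma zz_ne (Z : T.Zigzag) (i : ℕ) : Z.seq i ≠ Z.seq (i+1) := (Z.isZigzag.2.1 i).1

lemma zz_inter (Z : T.Zigzag) (i : ℕ) : (Z.seq i ∩ Z.seq (i+1)).Nonempty :=
  (Z.isZigzag.2.1 i).2.1

lemma zz_disj (Z : T.Zigzag) (i : ℕ) : Z.seq i ∩ Z.seq (i+2) = ∅ :=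
  Z.isZigzag.2.2.2 i

lemma not_mem_two (Z : T.Zigzag) (i : ℕ) {v : V} (h : v ∈ Z.seq i) :
    v ∉ Z.seq (i+2) := by
  intro h2
  have := zz_disj Z i
  have hv : v ∈ Z.seq i ∩ Z.seq (i+2) := Finset.mem_inter.mpr ⟨h, h2⟩
  rw [this] at hv
  exact absurd hv (Finset.notMem_empty v)

lemma inter_card_one (Z : T.Zigzag) (i : ℕ) :
    (Z.seq i ∩ Z.seq (i+1)).card = 1 := by
  have h1 := (zz_inter Z i).card_pos
  have hle : (Z.seq i ∩ Z.seq (i+1)).card ≤ 2 :=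
    (Finset.card_le_card Finset.inter_subset_left).trans (zz_card Z i).le
  rcases (by omega : (Z.seq i ∩ Z.seq (i+1)).card = 1 ∨
      (Z.seq i ∩ Z.seq (i+1)).card = 2) with h | h
  · exact h
  · exfalso
    have h2 : Z.seq i ∩ Z.seq (i+1) = Z.seq i :=
      Finset.eq_of_subset_of_card_le Finset.inter_subset_left
        (by rw [h, zz_card])
  -- then seq i ⊆ seq (i+1)
    have h3 : Z.seq i ⊆ Z.seq (i+1) := by
      rw [← h2]; exact Finset.inter_subset_right
    exact zz_ne Z i (Finset.eq_of_subset_of_card_le h3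
      (by rw [zz_card, zz_card]))

lemma face_eq_union (Z : T.Zigzag) (i : ℕ) {F : Finset V} (hF : F ∈ T.faces)
    (h1 : Z.seq i ⊆ F) (h2 : Z.seq (i+1) ⊆ F) :
    F = Z.seq i ∪ Z.seq (i+1) := by
  have hcard : (Z.seq i ∪ Z.seq (i+1)).card = 3 := by
    have h := Finset.card_union_add_card_inter (Z.seq i) (Z.seq (i+1))
    rw [inter_card_one, zz_card, zz_card] at h
    omega
  exact (Finset.eq_of_subset_of_card_le (Finset.union_subset h1 h2)
    (by rw [hcard, T.card_eq F hF])).symm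

lemma faceAt_mem (Z : T.Zigzag) (i : ℕ) : Z.seq i ∪ Z.seq (i+1) ∈ T.faces := by
  obtain ⟨F, hF, h1, h2⟩ := (Z.isZigzag.2.1 i).2.2
  rw [← face_eq_union Z i hF h1 h2]
  exact hF

lemma faceAt_ne (Z : T.Zigzag) (i : ℕ) :
    Z.seq i ∪ Z.seq (i+1) ≠ Z.seq (i+1) ∪ Z.seq (i+2) :=
  Z.isZigzag.2.2.1 i _ (faceAt_mem Z i) _ (faceAt_mem Z (i+1))
    Finset.subset_union_left Finset.subset_union_right
    Finset.subset_union_left Finset.subset_union_right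

lemma other_face_unique {e F G H : Finset V} (he : e.card = 2)
    (hF : F ∈ T.faces) (hG : G ∈ T.faces) (hH : H ∈ T.faces)
    (heF : e ⊆ F) (heG : e ⊆ G) (heH : e ⊆ H) (hFG : F ≠ G) (hHF : H ≠ F) :
    H = G := by
  have h2 : (T.faces.filter fun X => e ⊆ X).card = 2 :=
    T.edge_two_faces e he ⟨F, hF, heF⟩
  have hsub : ({F, G} : Finset (Finset V)) ⊆ T.faces.filter fun X => e ⊆ X := by
    intro X hX
    simp only [Finset.mem_insert, Finset.mem_singleton] at hX
    rcases hX with rfl | rfl <;> simp [Finset.mem_filter, hF, hG, heF, heG]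
  have hcard : ({F, G} : Finset (Finset V)).card = 2 := Finset.card_pair hFG
  have heq : T.faces.filter (fun X => e ⊆ X) = {F, G} :=
    (Finset.eq_of_subset_of_card_le hsub (by rw [h2, hcard])).symm
  have hHin : H ∈ ({F, G} : Finset (Finset V)) := by
    rw [← heq]; simp [Finset.mem_filter, hH, heH]
  simp only [Finset.mem_insert, Finset.mem_singleton] at hHin
  rcases hHin with rfl | rfl
  · exact absurd rfl hHF
  · rfl

lemma pair_decomp {s : Finset V} (hs : s.card = 2) {x : V} (hx : x ∈ s) :
    ∃ z, z ≠ x ∧ s = {x, z} := by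
  obtain ⟨a, b, hab, rfl⟩ := Finset.card_eq_two.mp hs
  simp only [Finset.mem_insert, Finset.mem_singleton] at hx
  rcases hx with rfl | rfl
  · exact ⟨b, hab.symm, rfl⟩
  · exact ⟨a, hab, Finset.pair_comm a x⟩

lemma decomp (Z : T.Zigzag) (t : ℕ) :
    ∃ x y z : V, x ≠ y ∧ x ≠ z ∧ y ≠ z ∧ Z.seq t = {x, z} ∧
      Z.seq (t+1) = {x, y} := by
  obtain ⟨x, hx⟩ := zz_inter Z t
  rw [Finset.mem_inter] at hx
  obtain ⟨z, hzx, hz⟩ := pair_decomp (zz_card Z t) hx.1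
  obtain ⟨y, hyx, hy⟩ := pair_decomp (zz_card Z (t+1)) hx.2
  refine ⟨x, y, z, hyx.symm, hzx.symm, ?_, hz, hy⟩
  intro h
  subst h
  exact zz_ne Z t (hz.trans hy.symm)

lemma step_formula (Z : T.Zigzag) (a : ℕ) :
    Z.seq (a+2) = (Z.seq (a+1) ∪ Z.seq (a+2)) \ Z.seq a := by
  have hint : (Z.seq (a+1) ∪ Z.seq (a+2)) ∩ Z.seq a = Z.seq a ∩ Z.seq (a+1) := by
    ext v
    simp only [Finset.mem_inter, Finset.mem_union]
    constructor
    · rintro ⟨hv1 | hv2, hva⟩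
      · exact ⟨hva, hv1⟩
      · exact absurd hv2 (not_mem_two Z a hva)
    · rintro ⟨hva, hv1⟩
      exact ⟨Or.inl hv1, hva⟩
  have hsub : Z.seq (a+2) ⊆ (Z.seq (a+1) ∪ Z.seq (a+2)) \ Z.seq a := by
    intro v hv
    rw [Finset.mem_sdiff]
    refine ⟨Finset.mem_union_right _ hv, fun hva => not_mem_two Z a hva hv⟩
  have hu3 : (Z.seq (a+1) ∪ Z.seq (a+2)).card = 3 := by
    rw [← face_eq_union Z (a+1) (faceAt_mem Z (a+1))
      Finset.subset_union_left Finset.subset_union_right]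
    exact T.card_eq _ (faceAt_mem Z (a+1))
  have hcard : ((Z.seq (a+1) ∪ Z.seq (a+2)) \ Z.seq a).card = 2 := by
    have h := Finset.card_sdiff_add_card_inter (Z.seq (a+1) ∪ Z.seq (a+2)) (Z.seq a)
    rw [hint, inter_card_one, hu3] at h
    omega
  exact Finset.eq_of_subset_of_card_le hsub (by rw [hcard, zz_card])

lemma det_step (Z Z' : T.Zigzag) (a b : ℕ)
    (h0 : Z.seq a = Z'.seq b) (h1 : Z.seq (a+1) = Z'.seq (b+1)) :
    Z.seq (a+2) = Z'.seq (b+2) := by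
  have hO : Z.seq (a+1) ∪ Z.seq (a+2) = Z'.seq (b+1) ∪ Z'.seq (b+2) := by
    refine other_face_unique (e := Z.seq (a+1)) (F := Z.seq a ∪ Z.seq (a+1))
      (zz_card Z (a+1)) (faceAt_mem Z a) ?_ (faceAt_mem Z (a+1))
      Finset.subset_union_right ?_ Finset.subset_union_left ?_ (faceAt_ne Z a).symm
    · exact faceAt_mem Z' (b+1)
    · rw [h1]; exact Finset.subset_union_left
    · rw [h0, h1]; exact faceAt_ne Z' b
  rw [step_formula Z a, step_formula Z' b, hO, h0]

lemma det (Z Z' : T.Zigzag) (a b : ℕ)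
    (h0 : Z.seq a = Z'.seq b) (h1 : Z.seq (a+1) = Z'.seq (b+1)) :
    ∀ k, Z.seq (a+k) = Z'.seq (b+k) := by
  have key : ∀ k, Z.seq (a+k) = Z'.seq (b+k) ∧ Z.seq (a+k+1) = Z'.seq (b+k+1) := by
    intro k
    induction k with
    | zero => exact ⟨h0, h1⟩
    | succ n ih => exact ⟨ih.2, det_step Z Z' (a+n) (b+n) ih.1 ih.2⟩
  exact fun k => (key k).1

end ZMAux
section ZMMain

open Finset

variable {V : Type} [Fintype V] [DecidableEq V] {T : Triangulation V}

lemma next_visit (hAll : ∀ F ∈ T.faces, T.MFIsId F) (Z : T.Zigzag) (t : ℕ) :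
    ∃ s, t + 3 ≤ s ∧ Z.seq s = Z.seq (t+1) ∧
      Z.seq s ∪ Z.seq (s+1) = Z.seq t ∪ Z.seq (t+1) ∧
      ∀ k, t < k → k < s → Z.seq k ∪ Z.seq (k+1) ≠ Z.seq t ∪ Z.seq (t+1) := by
  obtain ⟨x, y, z, hxy, hxz, hyz, ht, ht1⟩ := decomp Z t
  set F := Z.seq t ∪ Z.seq (t+1) with hFdef
  have hF : F ∈ T.faces := faceAt_mem Z t
  have hxF : x ∈ F := Finset.mem_union_left _ (by rw [ht]; simp)
  have hzF : z ∈ F := Finset.mem_union_left _ (by rw [ht]; simp)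
  have hyF : y ∈ F := Finset.mem_union_right _ (by rw [ht1]; simp)
  have hxt : x ∈ Z.seq t := by rw [ht]; simp
  have happ := hAll F hF x y hxF hyF hxy
  obtain ⟨-, -, Z', i, j, ⟨z₁, hz₁F, hz₁x, hz₁y, hPi⟩, hPi1, hij, hPj, -, -, hbet⟩ := happ
  have hz₁ : z₁ = z := by
    have hm := hz₁F
    rw [hFdef, ht, ht1] at hm
    simp only [Finset.mem_union, Finset.mem_insert, Finset.mem_singleton] at hm
    rcases hm with (rfl | rfl) | (rfl | rfl)
    · exact absurd rfl hz₁x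
    · rfl
    · exact absurd rfl hz₁x
    · exact absurd rfl hz₁y
  have hZ'i : Z'.seq i = Z.seq t := by
    rw [hPi.1, hz₁, ht, Finset.pair_comm]
  have hZ'i1 : Z'.seq (i+1) = Z.seq (t+1) := by rw [hPi1.1, ht1]
  have hdet : ∀ k, Z'.seq (i+k) = Z.seq (t+k) := det Z' Z i t hZ'i hZ'i1
  obtain ⟨m, rfl⟩ : ∃ m, j = i + 2 + m := ⟨j - (i+2), by omega⟩
  have hs : Z.seq (t+2+m) = {x, y} := by
    have h := hPj.1
    rw [show i+2+m = i+(2+m) by omega, hdet (2+m),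
      show t+(2+m) = t+2+m by omega] at h
    exact h
  -- m ≥ 1
  rcases Nat.eq_zero_or_pos m with rfl | hm
  · exfalso
    have hx2 : x ∈ Z.seq (t+2) := by
      rw [show t+2 = t+2+0 by omega, hs]; simp
    exact not_mem_two Z t hxt hx2
  obtain ⟨m', rfl⟩ : ∃ m', m = m' + 1 := ⟨m - 1, by omega⟩
  set s := t + 3 + m' with hsdef
  have hseqs : Z.seq s = {x, y} := by
    rw [show s = t+2+(m'+1) by omega] at *; exact hs
  have hseq : Z.seq s = Z.seq (t+1) := by rw [hseqs, ht1]
  -- y ∈ seq (s+1)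
  have hys1 : y ∈ Z.seq (s+1) := by
    have h := hPj.2.2
    rw [show i+2+(m'+1)+1 = i+(3+m'+1) by omega, hdet (3+m'+1),
      show t+(3+m'+1) = s+1 by omega] at h
    exact h
  -- s' = s - 1
  set s' := t + 2 + m' with hs'def
  have hss' : s = s' + 1 := by omega
  have hynots' : y ∉ Z.seq s' := by
    intro hy
    exact not_mem_two Z s' hy (by rw [show s'+2 = s+1 by omega]; exact hys1)
  have hxs' : x ∈ Z.seq s' := by
    obtain ⟨w, hw⟩ := zz_inter Z s'
    rw [Finset.mem_inter] at hw
    have hw2 : w ∈ Z.seq s := by rw [hss']; exact hw.2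
    rw [hseqs] at hw2
    simp only [Finset.mem_insert, Finset.mem_singleton] at hw2
    rcases hw2 with rfl | rfl
    · exact hw.1
    · exact absurd hw.1 hynots'
  -- main: faceAt s = F
  have hsubs : Z.seq (t+1) ⊆ Z.seq s ∪ Z.seq (s+1) := by
    rw [← hseq]; exact Finset.subset_union_left
  have hsubs' : Z.seq (t+1) ⊆ Z.seq s' ∪ Z.seq (s'+1) := by
    rw [← hseq, ← hss']; exact Finset.subset_union_right
  have hne_ss' : Z.seq s' ∪ Z.seq (s'+1) ≠ Z.seq s ∪ Z.seq (s+1) := by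
    rw [hss']
    exact faceAt_ne Z s'
  have hFs : Z.seq s ∪ Z.seq (s+1) = F := by
    by_contra hne
    have hFs_eq : Z.seq s ∪ Z.seq (s+1) = Z.seq (t+1) ∪ Z.seq (t+2) :=
      other_face_unique (e := Z.seq (t+1)) (F := F) (zz_card Z (t+1)) hF
        (faceAt_mem Z (t+1)) (faceAt_mem Z s) Finset.subset_union_right
        Finset.subset_union_left hsubs (faceAt_ne Z t) hne
    have hFs'_eq : Z.seq s' ∪ Z.seq (s'+1) = F :=
      other_face_unique (e := Z.seq (t+1)) (F := Z.seq (t+1) ∪ Z.seq (t+2))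
        (zz_card Z (t+1)) (faceAt_mem Z (t+1)) hF (faceAt_mem Z s')
        Finset.subset_union_left Finset.subset_union_right hsubs'
        (faceAt_ne Z t).symm (by rw [hFs_eq] at hne_ss'; exact hne_ss')
    obtain ⟨c, hcx, hcs'⟩ := pair_decomp (zz_card Z s') hxs'
    have hcF : c ∈ F := by
      rw [← hFs'_eq]
      exact Finset.mem_union_left _ (by rw [hcs']; simp)
    refine hbet (i+2+m') (by omega) (by omega) c x hcF hxF ⟨?_, hcx, ?_⟩
    · rw [show i+2+m' = i+(2+m') by omega, hdet (2+m'),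
        show t+(2+m') = s' by omega, hcs', Finset.pair_comm]
    · rw [show i+2+m'+1 = i+(2+m'+1) by omega, hdet (2+m'+1),
        show t+(2+m'+1) = s by omega, hseqs]
      simp
  refine ⟨s, by omega, hseq, hFs, ?_⟩
  intro k hk1 hk2 hkF
  rcases Nat.lt_or_ge k (t+2) with hk | hk
  · have hkeq : k = t + 1 := by omega
    subst hkeq
    exact faceAt_ne Z t hkF.symm
  · obtain ⟨w, hw⟩ := zz_inter Z k
    rw [Finset.mem_inter] at hw
    have hwF : w ∈ F := by
      rw [← hkF]; exact Finset.mem_union_left _ hw.1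
    obtain ⟨a, haw, hka⟩ := pair_decomp (zz_card Z k) hw.1
    have haF : a ∈ F := by
      rw [← hkF]
      exact Finset.mem_union_left _ (by rw [hka]; simp)
    refine hbet (i+(k-t)) (by omega) (by omega) a w haF hwF ⟨?_, haw, ?_⟩
    · rw [hdet (k-t), show t+(k-t) = k by omega, hka, Finset.pair_comm]
    · rw [show i+(k-t)+1 = i+(k-t+1) by omega, hdet (k-t+1),
        show t+(k-t+1) = k+1 by omega]
      exact hw.2

end ZMMain

/-- every triangulation contains a face whose z-monodromy is
not the identity. -/
theorem exists_face_not_M1 {V : Type} [Fintype V] [DecidableEq V]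
    (T : Triangulation V) :
    ∃ F ∈ T.faces, ¬ T.MFIsId F := by
  by_contra h
  push_neg at h
  have hAll : ∀ F ∈ T.faces, T.MFIsId F := h
  -- obtain a zigzag
  obtain ⟨F₀, hF₀⟩ := T.faces_nonempty
  have hc : 1 < F₀.card := by rw [T.card_eq F₀ hF₀]; omega
  obtain ⟨x, hx, y, hy, hxy⟩ := Finset.one_lt_card.mp hc
  obtain ⟨-, -, Z, -, -, -, -⟩ := hAll F₀ hF₀ x y hx hy hxy
  -- the set of excursion lengths
  set D : Set ℕ := {d | ∃ (Z : T.Zigzag) (t s : ℕ), s = t + d ∧ t + 3 ≤ s ∧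
    Z.seq s = Z.seq (t+1) ∧ Z.seq s ∪ Z.seq (s+1) = Z.seq t ∪ Z.seq (t+1) ∧
    ∀ k, t < k → k < s → Z.seq k ∪ Z.seq (k+1) ≠ Z.seq t ∪ Z.seq (t+1)}
    with hDdef
  have hne : D.Nonempty := by
    obtain ⟨s, h3, h1, h2, h4⟩ := next_visit hAll Z 0
    exact ⟨s, Z, 0, s, by omega, h3, h1, h2, h4⟩
  have hmem := Nat.sInf_mem hne
  obtain ⟨Z₀, t, s, hst, h3, hseq, hface, hno⟩ := hmem
  obtain ⟨s₁, h3', hseq', hface', hno'⟩ := next_visit hAll Z₀ (t+1)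
  -- the face at s-1 equals the face at t+1
  obtain ⟨s', rfl⟩ : ∃ s', s = s' + 1 := ⟨s - 1, by omega⟩
  have hFs' : Z₀.seq s' ∪ Z₀.seq (s'+1) = Z₀.seq (t+1) ∪ Z₀.seq (t+2) := by
    refine other_face_unique (e := Z₀.seq (t+1)) (F := Z₀.seq t ∪ Z₀.seq (t+1))
      (zz_card Z₀ (t+1)) (faceAt_mem Z₀ t) (faceAt_mem Z₀ (t+1))
      (faceAt_mem Z₀ s') Finset.subset_union_right Finset.subset_union_left
      ?_ (faceAt_ne Z₀ t) ?_
    · rw [← hseq]; exact Finset.subset_union_right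
    · have h := faceAt_ne Z₀ s'
      rw [← hface]
      exact h
  have hlt : s₁ < s' + 1 := by
    by_contra hge
    push_neg at hge
    exact hno' s' (by omega) (by omega) hFs'
  have hD1 : s₁ - (t+1) ∈ D := ⟨Z₀, t+1, s₁, by omega, h3', hseq', hface', hno'⟩
  have hle := Nat.sInf_le hD1
  omega
end

section
/- Every zigzag in a triangulation is edge-simple (all its edges are mutually distinct) if and only if M_F = D_F⁻¹ for every face F. -/
open Finset

set_option linter.unusedSectionVars false

namespace Triangulation

variable {V : Type} [Fintype V] [DecidableEq V] {T : Triangulation V}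

lemma pair_subset_triple {c : Finset V} {x y z : V} (hc : c ⊆ {x, y, z})
    (h2 : c.card = 2) :
    c = {x, y} ∨ c = {y, z} ∨ c = {x, z} := by
  obtain ⟨a, b, hab, rfl⟩ := Finset.card_eq_two.mp h2
  have ha : a ∈ ({x, y, z} : Finset V) := hc (by simp)
  have hb : b ∈ ({x, y, z} : Finset V) := hc (by simp)
  simp only [Finset.mem_insert, Finset.mem_singleton] at ha hb
  rcases ha with rfl | rfl | rfl <;> rcases hb with rfl | rfl | rfl <;>
    simp_all [Finset.pair_comm]

lemma eq_pair_of_mem {e : Finset V} (he : e.card = 2) {q : V} (hq : q ∈ e) :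
    ∃ p, p ≠ q ∧ e = {p, q} := by
  obtain ⟨a, b, hab, rfl⟩ := Finset.card_eq_two.mp he
  simp only [Finset.mem_insert, Finset.mem_singleton] at hq
  rcases hq with rfl | rfl
  · exact ⟨b, hab.symm, Finset.pair_comm q b⟩
  · exact ⟨a, hab, rfl⟩

lemma face_eq_union {F e₁ e₂ : Finset V} (hF : F ∈ T.faces) (h1 : e₁ ⊆ F)
    (h2 : e₂ ⊆ F) (hc1 : e₁.card = 2) (hc2 : e₂.card = 2) (hne : e₁ ≠ e₂) :
    F = e₁ ∪ e₂ := by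
  have hsub : e₁ ∪ e₂ ⊆ F := Finset.union_subset h1 h2
  have hint : (e₁ ∩ e₂).card ≤ 1 := by
    by_contra h
    push_neg at h
    have h1' : e₁ ∩ e₂ = e₁ :=
      Finset.eq_of_subset_of_card_le Finset.inter_subset_left (by omega)
    have h2' : e₁ ∩ e₂ = e₂ :=
      Finset.eq_of_subset_of_card_le Finset.inter_subset_right (by omega)
    exact hne (h1'.symm.trans h2')
  have hcu := Finset.card_union_add_card_inter e₁ e₂
  have hF3 := T.card_eq F hF
  exact (Finset.eq_of_subset_of_card_le hsub (by omega)).symm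

lemma face_cases {e A B C : Finset V} (he : e.card = 2) (hA : A ∈ T.faces)
    (heA : e ⊆ A) (hB : B ∈ T.faces) (heB : e ⊆ B) (hAB : A ≠ B)
    (hC : C ∈ T.faces) (heC : e ⊆ C) : C = A ∨ C = B := by
  have h2 := T.edge_two_faces e he ⟨A, hA, heA⟩
  by_contra h
  push_neg at h
  have hsub : ({A, B, C} : Finset (Finset V)) ⊆
      T.faces.filter (fun F => e ⊆ F) := by
    intro X hX
    simp only [Finset.mem_insert, Finset.mem_singleton] at hX
    rcases hX with rfl | rfl | rfl <;> simp [Finset.mem_filter, hA, hB, hC, heA, heB, heC]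
  have h3 : ({A, B, C} : Finset (Finset V)).card = 3 :=
    Finset.card_eq_three.mpr ⟨A, B, C, hAB, (h.1).symm, (h.2).symm, rfl⟩
  have := Finset.card_le_card hsub
  omega

lemma zig_union_face {f : ℕ → Finset V} (hf : T.IsZigzagSeq f) (i : ℕ) :
    f i ∪ f (i + 1) ∈ T.faces := by
  obtain ⟨h1, h2, h3, h4⟩ := hf
  obtain ⟨hne, hint, F, hF, hiF, hi1F⟩ := h2 i
  have := face_eq_union hF hiF hi1F (h1 i).1 (h1 (i + 1)).1 hne
  exact this ▸ hF

lemma zig_next {f : ℕ → Finset V} (hf : T.IsZigzagSeq f) (i : ℕ) {B : Finset V}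
    (hB : B ∈ T.faces) (hsub : f (i + 1) ⊆ B) (hne : B ≠ f i ∪ f (i + 1)) :
    f (i + 2) = B \ f i := by
  have hA : f i ∪ f (i + 1) ∈ T.faces := zig_union_face hf i
  obtain ⟨h1, h2, h3, h4⟩ := hf
  obtain ⟨hne1, hint1, F', hF', h1F', h2F'⟩ := h2 (i + 1)
  have hAF' : (f i ∪ f (i + 1)) ≠ F' :=
    h3 i _ hA _ hF' Finset.subset_union_left Finset.subset_union_right h1F' h2F'
  have hF'B : F' = B := by
    rcases face_cases (h1 (i + 1)).1 hA Finset.subset_union_right hB hsub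
        hne.symm hF' h1F' with h | h
    · exact absurd h.symm hAF'
    · exact h
  have hsub2 : f (i + 2) ⊆ B \ f i := by
    intro x hx
    rw [Finset.mem_sdiff]
    refine ⟨hF'B ▸ h2F' hx, fun hxi => ?_⟩
    have hmem : x ∈ f i ∩ f (i + 2) := Finset.mem_inter.mpr ⟨hxi, hx⟩
    rw [h4 i] at hmem
    exact absurd hmem (Finset.notMem_empty x)
  have hone : 1 ≤ (B ∩ f i).card := by
    obtain ⟨hne0, hint0, _⟩ := h2 i
    obtain ⟨x, hx⟩ := hint0
    rw [Finset.mem_inter] at hx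
    exact Finset.card_pos.mpr ⟨x, Finset.mem_inter.mpr ⟨hsub hx.2, hx.1⟩⟩
  have hsd := Finset.card_sdiff_add_card_inter B (f i)
  have hB3 := T.card_eq B hB
  exact Finset.eq_of_subset_of_card_le hsub2 (by rw [(h1 (i + 2)).1]; omega)

lemma zig_det {f g : ℕ → Finset V} (hf : T.IsZigzagSeq f) (hg : T.IsZigzagSeq g)
    {i i' : ℕ} (h0 : f i = g i') (h1 : f (i + 1) = g (i' + 1)) :
    ∀ k, f (i + k) = g (i' + k) := by
  have key : ∀ k, f (i + k) = g (i' + k) ∧ f (i + k + 1) = g (i' + k + 1) := by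
    intro k
    induction k with
    | zero => exact ⟨h0, h1⟩
    | succ k ih =>
      refine ⟨ih.2, ?_⟩
      obtain ⟨hfe, hf2, hf3, hf4⟩ := hf
      obtain ⟨hne, hint, B, hB, hsub1, hsub2⟩ := hf2 (i + k + 1)
      have hBA : B ≠ f (i + k) ∪ f (i + k + 1) := by
        intro h
        exact hf3 (i + k) _ (zig_union_face ⟨hfe, hf2, hf3, hf4⟩ (i + k)) _ hB
          Finset.subset_union_left Finset.subset_union_right
          (h ▸ hsub1) (h ▸ hsub2) (by rw [h])
      have e1 : f (i + k + 2) = B \ f (i + k) :=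
        zig_next ⟨hfe, hf2, hf3, hf4⟩ (i + k) hB hsub1 hBA
      have e2 : g (i' + k + 2) = B \ g (i' + k) :=
        zig_next hg (i' + k) hB (ih.2 ▸ hsub1) (by rw [← ih.1, ← ih.2]; exact hBA)
      have : f (i + (k + 1) + 1) = f (i + k + 2) := rfl
      rw [this, e1, ih.1, ← e2]
      rfl
  exact fun k => (key k).1

end Triangulation

set_option linter.unusedSectionVars false

namespace Triangulation

variable {V : Type} [Fintype V] [DecidableEq V] {T : Triangulation V}

/-- A flag: two distinct edges spanning a face. -/
def IsFlag (T : Triangulation V) (p : Finset V × Finset V) : Prop :=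
  p.1.card = 2 ∧ p.2.card = 2 ∧ p.1 ≠ p.2 ∧ p.1 ∪ p.2 ∈ T.faces

lemma flag_inter_card {p : Finset V × Finset V} (hp : T.IsFlag p) :
    (p.1 ∩ p.2).card = 1 := by
  obtain ⟨h1, h2, hne, hA⟩ := hp
  have h3 := T.card_eq _ hA
  have hcu := Finset.card_union_add_card_inter p.1 p.2
  have hint : (p.1 ∩ p.2).card ≤ 1 := by
    by_contra h
    push_neg at h
    have h1' : p.1 ∩ p.2 = p.1 :=
      Finset.eq_of_subset_of_card_le Finset.inter_subset_left (by omega)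
    have h2' : p.1 ∩ p.2 = p.2 :=
      Finset.eq_of_subset_of_card_le Finset.inter_subset_right (by omega)
    exact hne (h1'.symm.trans h2')
  omega

lemma exists_other_face {e A : Finset V} (he : e.card = 2) (hA : A ∈ T.faces)
    (heA : e ⊆ A) : ∃ B, B ∈ T.faces ∧ e ⊆ B ∧ B ≠ A := by
  have h2 := T.edge_two_faces e he ⟨A, hA, heA⟩
  by_contra h
  push_neg at h
  have hsub : T.faces.filter (fun F => e ⊆ F) ⊆ {A} := by
    intro X hX
    rw [Finset.mem_filter] at hX
    simp [h X hX.1 hX.2]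
  have := Finset.card_le_card hsub
  rw [h2, Finset.card_singleton] at this
  omega

open Classical in
/-- The face containing `e` other than `A`. -/
noncomputable def otherFace (T : Triangulation V) (e A : Finset V) : Finset V :=
  if h : ∃ B, B ∈ T.faces ∧ e ⊆ B ∧ B ≠ A then h.choose else ∅

lemma otherFace_spec {e A : Finset V}
    (h : ∃ B, B ∈ T.faces ∧ e ⊆ B ∧ B ≠ A) :
    T.otherFace e A ∈ T.faces ∧ e ⊆ T.otherFace e A ∧ T.otherFace e A ≠ A := by
  rw [otherFace, dif_pos h]
  exact h.choose_spec

/-- The zigzag step on flags. -/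
noncomputable def stepFlag (T : Triangulation V) (p : Finset V × Finset V) :
    Finset V × Finset V :=
  (p.2, T.otherFace p.2 (p.1 ∪ p.2) \ p.1)

lemma stepFlag_fst (p : Finset V × Finset V) : (T.stepFlag p).1 = p.2 := rfl

lemma stepFlag_spec {p : Finset V × Finset V} (hp : T.IsFlag p) :
    T.IsFlag (T.stepFlag p) ∧
    p.1 ∩ (T.stepFlag p).2 = ∅ ∧
    p.2 ∪ (T.stepFlag p).2 = T.otherFace p.2 (p.1 ∪ p.2) ∧
    p.2 ∪ (T.stepFlag p).2 ≠ p.1 ∪ p.2 ∧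
    p.2 ∪ (T.stepFlag p).2 ∈ T.faces := by
  obtain ⟨hc1, hc2, hne, hA⟩ := hp
  have hex : ∃ B, B ∈ T.faces ∧ p.2 ⊆ B ∧ B ≠ p.1 ∪ p.2 :=
    exists_other_face hc2 hA Finset.subset_union_right
  obtain ⟨hBf, hBsub, hBA⟩ := otherFace_spec hex
  set B := T.otherFace p.2 (p.1 ∪ p.2) with hBdef
  set c := B \ p.1 with hcdef
  have hA3 := T.card_eq _ hA
  have hB3 := T.card_eq _ hBf
  have hint1 : (p.1 ∩ p.2).card = 1 := flag_inter_card ⟨hc1, hc2, hne, hA⟩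
  obtain ⟨s, hs⟩ := Finset.card_eq_one.mp hint1
  have hs1 : s ∈ p.1 := (Finset.mem_inter.mp (hs ▸ Finset.mem_singleton_self s)).1
  have hs2 : s ∈ p.2 := (Finset.mem_inter.mp (hs ▸ Finset.mem_singleton_self s)).2
  -- B ∩ p.1 = {s}
  have hBp1 : B ∩ p.1 = {s} := by
    apply Finset.Subset.antisymm
    · intro x hx
      rw [Finset.mem_inter] at hx
      rw [Finset.mem_singleton]
      by_contra hxs
      have hx2 : x ∉ p.2 := by
        intro hx2
        have : x ∈ p.1 ∩ p.2 := Finset.mem_inter.mpr ⟨hx.2, hx2⟩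
        rw [hs, Finset.mem_singleton] at this
        exact hxs this
      have hp1 : ({x, s} : Finset V) = p.1 := by
        apply Finset.eq_of_subset_of_card_le
        · intro y hy
          simp only [Finset.mem_insert, Finset.mem_singleton] at hy
          rcases hy with rfl | rfl
          · exact hx.2
          · exact hs1
        · rw [Finset.card_pair hxs]; omega
      have hAB : p.1 ∪ p.2 ⊆ B := by
        apply Finset.union_subset _ hBsub
        rw [← hp1]
        intro y hy
        simp only [Finset.mem_insert, Finset.mem_singleton] at hy
        rcases hy with rfl | rfl
        · exact hx.1
        · exact hBsub hs2
      exact hBA (Finset.eq_of_subset_of_card_le hAB (by omega)).symm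
    · intro x hx
      rw [Finset.mem_singleton] at hx
      subst hx
      exact Finset.mem_inter.mpr ⟨hBsub hs2, hs1⟩
  have hccard : c.card = 2 := by
    have := Finset.card_sdiff_add_card_inter B p.1
    rw [← hcdef, hBp1, Finset.card_singleton] at this
    omega
  have hcs : s ∉ c := by
    rw [hcdef, Finset.mem_sdiff]
    intro h
    exact h.2 hs1
  have hnec : p.2 ≠ c := fun h => hcs (h ▸ hs2)
  have hunion : p.2 ∪ c = B := by
    apply Finset.Subset.antisymm
    · exact Finset.union_subset hBsub Finset.sdiff_subset
    · intro x hx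
      by_cases hx1 : x ∈ p.1
      · have : x ∈ B ∩ p.1 := Finset.mem_inter.mpr ⟨hx, hx1⟩
        rw [hBp1, Finset.mem_singleton] at this
        subst this
        exact Finset.mem_union_left _ hs2
      · exact Finset.mem_union_right _ (Finset.mem_sdiff.mpr ⟨hx, hx1⟩)
  refine ⟨⟨hc2, hccard, hnec, ?_⟩, ?_, ?_, ?_, ?_⟩
  · show p.2 ∪ c ∈ T.faces
    rw [hunion]; exact hBf
  · exact Finset.inter_sdiff_self p.1 B
  · show p.2 ∪ c = B
    exact hunion
  · show p.2 ∪ c ≠ p.1 ∪ p.2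
    rw [hunion]; exact hBA
  · show p.2 ∪ c ∈ T.faces
    rw [hunion]; exact hBf

lemma flag_iter (hp : T.IsFlag p) (k : ℕ) : T.IsFlag ((T.stepFlag)^[k] p) := by
  induction k with
  | zero => exact hp
  | succ k ih =>
    rw [Function.iterate_succ_apply']
    exact (stepFlag_spec ih).1

end Triangulation

set_option linter.unusedSectionVars false

namespace Triangulation

variable {V : Type} [Fintype V] [DecidableEq V] {T : Triangulation V}

lemma stepFlag_cancel {p p' : Finset V × Finset V} (hp : T.IsFlag p)
    (hp' : T.IsFlag p') (h : T.stepFlag p = T.stepFlag p') : p = p' := by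
  have h2 : p.2 = p'.2 := congrArg Prod.fst h
  obtain ⟨hq, hq2, hq3, hqA, hqB⟩ := stepFlag_spec hp
  obtain ⟨hq', hq2', hq3', hqA', hqB'⟩ := stepFlag_spec hp'
  have hc : (T.stepFlag p).2 = (T.stepFlag p').2 := congrArg Prod.snd h
  set c := (T.stepFlag p).2 with hcdef
  -- the face B = p.2 ∪ c
  have hBf : p.2 ∪ c ∈ T.faces := hqB
  have hA : p.1 ∪ p.2 ∈ T.faces := hp.2.2.2
  have hA' : p'.1 ∪ p'.2 ∈ T.faces := hp'.2.2.2
  have hAB : p.1 ∪ p.2 ≠ p.2 ∪ c := hqA.symm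
  have hA'B : p'.1 ∪ p'.2 ≠ p.2 ∪ c := by
    rw [h2, hc]; exact hqA'.symm
  have hsub : p.2 ⊆ p.1 ∪ p.2 := Finset.subset_union_right
  have hsub' : p.2 ⊆ p'.1 ∪ p'.2 := h2 ▸ (Finset.subset_union_right)
  have hsubB : p.2 ⊆ p.2 ∪ c := Finset.subset_union_left
  have hAA' : p'.1 ∪ p'.2 = p.1 ∪ p.2 := by
    rcases face_cases hp.2.1 hA hsub hBf hsubB hAB hA' hsub' with h | h
    · exact h
    · exact absurd h hA'B
  -- now p.1 = (p.1 ∪ p.2) \ c = p'.1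
  have key : ∀ q : Finset V × Finset V, T.IsFlag q → q.2 = p.2 →
      q.1 ∪ q.2 = p.1 ∪ p.2 → q.1 ∩ (T.stepFlag q).2 = ∅ →
      (T.stepFlag q).2 = c → q.1 = (p.1 ∪ p.2) \ c := by
    intro q hfq hq2eq hqu hqint hqc
    apply Finset.eq_of_subset_of_card_le
    · intro x hx
      rw [Finset.mem_sdiff]
      refine ⟨hqu ▸ Finset.mem_union_left _ hx, fun hxc => ?_⟩
      have : x ∈ q.1 ∩ (T.stepFlag q).2 := Finset.mem_inter.mpr ⟨hx, hqc ▸ hxc⟩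
      rw [hqint] at this
      exact absurd this (Finset.notMem_empty x)
    · -- card ((p.1 ∪ p.2) \ c) ≤ 2
      have h3 := T.card_eq _ hA
      have hi : 1 ≤ ((p.1 ∪ p.2) ∩ c).card := by
        have hic : (p.2 ∩ c).card = 1 := by
          have := flag_inter_card hq
          rwa [stepFlag_fst] at this
        have : p.2 ∩ c ⊆ (p.1 ∪ p.2) ∩ c :=
          Finset.inter_subset_inter (Finset.subset_union_right) (le_refl c)
        have := Finset.card_le_card this
        omega
      have := Finset.card_sdiff_add_card_inter (p.1 ∪ p.2) c
      have := hfq.1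
      omega
  have e1 : p.1 = (p.1 ∪ p.2) \ c := key p hp rfl rfl hq2 rfl
  have e2 : p'.1 = (p.1 ∪ p.2) \ c := key p' hp' h2.symm hAA' hq2' hc.symm
  exact Prod.ext (e1.trans e2.symm) h2

lemma flag_ret {p : Finset V × Finset V} (hp : T.IsFlag p) :
    ∃ m, 0 < m ∧ (T.stepFlag)^[m] p = p := by
  have key : ∀ a m : ℕ, 0 < m → (T.stepFlag)^[a + m] p = (T.stepFlag)^[a] p →
      (T.stepFlag)^[m] p = p := by
    intro a
    induction a with
    | zero => intro m _ h; rwa [Nat.zero_add] at h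
    | succ a ih =>
      intro m hm h
      apply ih m hm
      have h1 : (T.stepFlag)^[a + 1 + m] p = T.stepFlag ((T.stepFlag)^[a + m] p) := by
        rw [show a + 1 + m = (a + m) + 1 from by omega, Function.iterate_succ_apply']
      have h2 : (T.stepFlag)^[a + 1] p = T.stepFlag ((T.stepFlag)^[a] p) :=
        Function.iterate_succ_apply' _ _ _
      rw [h1, h2] at h
      exact stepFlag_cancel (flag_iter hp (a + m)) (flag_iter hp a) h
  obtain ⟨a, b, hab, h⟩ :=
    Finite.exists_ne_map_eq_of_infinite (fun k : ℕ => (T.stepFlag)^[k] p)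
  rcases Nat.lt_or_ge a b with hlt | hge
  · exact ⟨b - a, by omega, key a (b - a) (by omega)
      (by rw [show a + (b - a) = b from by omega]; exact h.symm)⟩
  · have hlt : b < a := by omega
    exact ⟨a - b, by omega, key b (a - b) (by omega)
      (by rw [show b + (a - b) = a from by omega]; exact h)⟩

lemma flag_isZigzag {p : Finset V × Finset V} (hp : T.IsFlag p) :
    T.IsZigzagSeq (fun k => ((T.stepFlag)^[k] p).1) := by
  have hq : ∀ k, T.IsFlag ((T.stepFlag)^[k] p) := flag_iter hp
  have hfst : ∀ k, ((T.stepFlag)^[k + 1] p).1 = ((T.stepFlag)^[k] p).2 := by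
    intro k
    rw [Function.iterate_succ_apply', stepFlag_fst]
  have hsnd : ∀ k, ((T.stepFlag)^[k + 1] p).2 = (T.stepFlag ((T.stepFlag)^[k] p)).2 := by
    intro k
    rw [Function.iterate_succ_apply']
  refine ⟨?_, ?_, ?_, ?_⟩
  · intro i
    exact ⟨(hq i).1, _, (hq i).2.2.2, Finset.subset_union_left⟩
  · intro i
    dsimp only
    obtain ⟨h1, h2, hne, hA⟩ := hq i
    refine ⟨by rw [hfst i]; exact hne, ?_, _, hA, Finset.subset_union_left,
      by rw [hfst i]; exact Finset.subset_union_right⟩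
    rw [hfst i]
    rw [← Finset.card_pos, flag_inter_card (hq i)]
    omega
  · intro i F hF F' hF' hiF hi1F hi1F' hi2F'
    dsimp only at hiF hi1F hi1F' hi2F'
    obtain ⟨h1, h2, hne, hA⟩ := hq i
    have hstep := stepFlag_spec (hq i)
    rw [hfst i] at hi1F hi1F'
    rw [show i + 2 = i + 1 + 1 from by omega, hfst (i + 1), hsnd i] at hi2F'
    have hFeq : F = ((T.stepFlag)^[i] p).1 ∪ ((T.stepFlag)^[i] p).2 :=
      face_eq_union hF hiF hi1F h1 h2 hne
    have hF'eq : F' = ((T.stepFlag)^[i] p).2 ∪ (T.stepFlag ((T.stepFlag)^[i] p)).2 :=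
      face_eq_union hF' hi1F' hi2F' h2 hstep.1.2.1 hstep.1.2.2.1
    rw [hFeq, hF'eq]
    exact fun h => hstep.2.2.2.1 h.symm
  · intro i
    dsimp only
    have hstep := stepFlag_spec (hq i)
    rw [show i + 2 = i + 1 + 1 from by omega, hfst (i + 1), hsnd i]
    exact hstep.2.1

open Classical in
/-- The zigzag through a given flag. -/
noncomputable def zigzagThrough (T : Triangulation V) (p : Finset V × Finset V)
    (hp : T.IsFlag p) : T.Zigzag :=
  have hex : ∃ m, 0 < m ∧
      ∀ i, ((T.stepFlag)^[i + m] p).1 = ((T.stepFlag)^[i] p).1 := by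
    obtain ⟨m, hm, h⟩ := flag_ret hp
    exact ⟨m, hm, fun i => by
      rw [Function.iterate_add_apply, h]⟩
  { seq := fun k => ((T.stepFlag)^[k] p).1
    period := Nat.find hex
    period_pos := (Nat.find_spec hex).1
    periodic := (Nat.find_spec hex).2
    period_min := fun m hm h => Nat.find_le ⟨hm, h⟩
    isZigzag := flag_isZigzag hp }

lemma zigzagThrough_seq_zero {p : Finset V × Finset V} (hp : T.IsFlag p) :
    (T.zigzagThrough p hp).seq 0 = p.1 := rfl

lemma zigzagThrough_seq_one {p : Finset V × Finset V} (hp : T.IsFlag p) :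
    (T.zigzagThrough p hp).seq 1 = p.2 := rfl

end Triangulation

set_option linter.unusedSectionVars false

namespace Triangulation

variable {V : Type} [Fintype V] [DecidableEq V] {T : Triangulation V}

lemma edge_simple_imp
    (hsimple : ∀ Z : T.Zigzag, ∀ i j : ℕ, i < Z.period → j < Z.period →
      i ≠ j → Z.seq i ≠ Z.seq j) :
    ∀ F ∈ T.faces, T.MFIsDInv F := by
  intro F hF x y z hxyz hxy hyz hxz
  subst hxyz
  have hzx2 : ({z, x} : Finset V).card = 2 := Finset.card_pair (Ne.symm hxz)
  have hxy2 : ({x, y} : Finset V).card = 2 := Finset.card_pair hxy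
  have hne : ({z, x} : Finset V) ≠ {x, y} := by
    intro h
    have hy : y ∈ ({z, x} : Finset V) := by rw [h]; simp
    simp only [Finset.mem_insert, Finset.mem_singleton] at hy
    rcases hy with h' | h'
    · exact hyz h'
    · exact hxy h'.symm
  have hun : ({z, x} : Finset V) ∪ {x, y} = {x, y, z} := by
    ext a; simp; tauto
  have hp : T.IsFlag ({z, x}, {x, y}) :=
    ⟨hzx2, hxy2, hne, by show ({z, x} : Finset V) ∪ {x, y} ∈ T.faces; rw [hun]; exact hF⟩
  set Z := T.zigzagThrough _ hp with hZdef
  have h0 : Z.seq 0 = {z, x} := rfl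
  have h1 : Z.seq 1 = {x, y} := rfl
  have hzz := Z.isZigzag
  obtain ⟨he, hcons, hdist, hdisj⟩ := hzz
  set n := Z.period with hn
  have hper : ∀ i, Z.seq (i + n) = Z.seq i := Z.periodic
  have hnpos : 0 < n := Z.period_pos
  have hn1 : n ≠ 1 := by
    intro h
    have h01 := hper 0
    rw [h] at h01
    exact (hcons 0).1 h01.symm
  have hn2 : n ≠ 2 := by
    intro h
    have h02 := hper 0
    rw [h] at h02
    have hx0 : x ∈ Z.seq 0 := by rw [h0]; simp
    have hmem : x ∈ Z.seq 0 ∩ Z.seq (0 + 2) := Finset.mem_inter.mpr ⟨hx0, h02 ▸ hx0⟩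
    rw [hdisj 0] at hmem
    exact absurd hmem (Finset.notMem_empty x)
  have hn3 : 3 ≤ n := by omega
  have hy2 : y ∈ Z.seq 2 := by
    obtain ⟨u, hu⟩ := (hcons 1).2.1
    rw [Finset.mem_inter] at hu
    have hu1 : u ∈ ({x, y} : Finset V) := h1 ▸ hu.1
    simp only [Finset.mem_insert, Finset.mem_singleton] at hu1
    rcases hu1 with rfl | rfl
    · exfalso
      have hmem : u ∈ Z.seq 0 ∩ Z.seq (0 + 2) :=
        Finset.mem_inter.mpr ⟨by rw [h0]; simp, hu.2⟩
      rw [hdisj 0] at hmem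
      exact absurd hmem (Finset.notMem_empty u)
    · exact hu.2
  have hn0' : Z.seq n = {z, x} := by
    have := hper 0
    rw [Nat.zero_add] at this
    rw [this, h0]
  have hn1' : Z.seq (n + 1) = {x, y} := by
    have := hper 1
    rw [Nat.add_comm] at this
    rw [this, h1]
  have hyzsub : ({y, z} : Finset V) ⊆ {x, y, z} := by
    intro u hu; simp only [Finset.mem_insert, Finset.mem_singleton] at hu ⊢; tauto
  have hbet : ∀ k, 0 + 1 < k → k < n → ∀ a b, a ∈ ({x, y, z} : Finset V) →
      b ∈ ({x, y, z} : Finset V) → ¬ Z.Passes k a b := by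
    intro k hk1 hkn a b ha hb hpass
    obtain ⟨hfk, hab, hmem⟩ := hpass
    have hsubF : Z.seq k ⊆ ({x, y, z} : Finset V) := by
      rw [hfk]
      intro u hu
      simp only [Finset.mem_insert, Finset.mem_singleton] at hu
      rcases hu with rfl | rfl
      · exact ha
      · exact hb
    have hck : (Z.seq k).card = 2 := by rw [hfk]; exact Finset.card_pair hab
    rcases pair_subset_triple hsubF hck with hc | hc | hc
    · exact hsimple Z 1 k (by omega) hkn (by omega) (h1.trans hc.symm)
    · -- hard case: Z.seq k = {y, z}
      have hk2 : k ≠ 2 := by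
        intro h
        subst h
        have hmem2 : z ∈ Z.seq 0 ∩ Z.seq (0 + 2) :=
          Finset.mem_inter.mpr ⟨by rw [h0]; simp, by show z ∈ Z.seq 2; rw [hc]; simp⟩
        rw [hdisj 0] at hmem2
        exact absurd hmem2 (Finset.notMem_empty z)
      obtain ⟨k', rfl⟩ : ∃ k', k = k' + 1 := ⟨k - 1, by omega⟩
      have hk'2 : 2 ≤ k' := by omega
      have hP : Z.seq k' ∪ Z.seq (k' + 1) ∈ T.faces :=
        zig_union_face ⟨he, hcons, hdist, hdisj⟩ k'
      have hQ : Z.seq (k' + 1) ∪ Z.seq (k' + 1 + 1) ∈ T.faces :=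
        zig_union_face ⟨he, hcons, hdist, hdisj⟩ (k' + 1)
      have hPQ : Z.seq k' ∪ Z.seq (k' + 1) ≠ Z.seq (k' + 1) ∪ Z.seq (k' + 1 + 1) :=
        hdist k' _ hP _ hQ Finset.subset_union_left Finset.subset_union_right
          Finset.subset_union_left Finset.subset_union_right
      have hyz2 : ({y, z} : Finset V).card = 2 := Finset.card_pair hyz
      have hyzP : ({y, z} : Finset V) ⊆ Z.seq k' ∪ Z.seq (k' + 1) := by
        rw [← hc]; exact Finset.subset_union_right
      have hyzQ : ({y, z} : Finset V) ⊆ Z.seq (k' + 1) ∪ Z.seq (k' + 1 + 1) := by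
        rw [← hc]; exact Finset.subset_union_left
      rcases face_cases hyz2 hP hyzP hQ hyzQ hPQ hF hyzsub with hFP | hFQ
      · have hk'F : Z.seq k' ⊆ ({x, y, z} : Finset V) := hFP ▸ Finset.subset_union_left
        rcases pair_subset_triple hk'F (he k').1 with h' | h' | h'
        · exact hsimple Z 1 k' (by omega) (by omega) (by omega) (h1.trans h'.symm)
        · exact (hcons k').1 (h'.trans hc.symm)
        · exact hsimple Z 0 k' (by omega) (by omega) (by omega)
            (by rw [h0, h', Finset.pair_comm])
      · have hk2F : Z.seq (k' + 1 + 1) ⊆ ({x, y, z} : Finset V) :=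
          hFQ ▸ Finset.subset_union_right
        rcases Nat.lt_or_ge (k' + 2) n with hlt | hge
        · rcases pair_subset_triple hk2F (he (k' + 1 + 1)).1 with h' | h' | h'
          · exact hsimple Z 1 (k' + 1 + 1) (by omega) (by omega) (by omega)
              (h1.trans h'.symm)
          · exact (hcons (k' + 1)).1 (hc.trans h'.symm)
          · exact hsimple Z 0 (k' + 1 + 1) (by omega) (by omega) (by omega)
              (by rw [h0, h', Finset.pair_comm])
        · have hkn' : k' + 2 = n := by omega
          refine hdist (k' + 1) _ hF _ hF ?_ hk2F hk2F ?_ rfl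
          · rw [hc]; exact hyzsub
          · have hidx : Z.seq (k' + 1 + 2) = {x, y} := by
              rw [show k' + 1 + 2 = n + 1 from by omega]
              exact hn1'
            rw [hidx]
            intro u hu
            simp only [Finset.mem_insert, Finset.mem_singleton] at hu ⊢
            tauto
    · exact hsimple Z 0 k (by omega) hkn (by omega) (by rw [h0, hc, Finset.pair_comm])
  exact ⟨by simp, by simp, Z, 0, n,
    ⟨z, by simp, Ne.symm hxz, Ne.symm hyz, h0, Ne.symm hxz,
      by show x ∈ Z.seq 1; rw [h1]; simp⟩,
    ⟨h1, hxy, hy2⟩, by omega,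
    ⟨hn0', Ne.symm hxz, by show x ∈ Z.seq (n + 1); rw [hn1']; simp⟩,
    by simp, by simp, hbet⟩

end Triangulation

set_option linter.unusedSectionVars false

namespace Triangulation

variable {V : Type} [Fintype V] [DecidableEq V] {T : Triangulation V}

lemma backward_aux (hMF : ∀ F ∈ T.faces, T.MFIsDInv F) (Z : T.Zigzag) {i j : ℕ}
    (hij : i < j) (hjn : j < Z.period) (heq : Z.seq i = Z.seq j) : False := by
  classical
  obtain ⟨he, hcons, hdist, hdisj⟩ := Z.isZigzag
  set f := Z.seq with hfdef
  set n := Z.period with hndef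
  have hzz' : T.IsZigzagSeq f := ⟨he, hcons, hdist, hdisj⟩
  have hper : ∀ k, f (k + n) = f k := Z.periodic
  have hnpos : 0 < n := Z.period_pos
  have hpermul : ∀ t k, f (k + t * n) = f k := by
    intro t
    induction t with
    | zero => intro k; simp
    | succ t ih =>
      intro k
      have hidx : k + (t + 1) * n = (k + t * n) + n := by ring
      rw [hidx, hper, ih]
  have hex : ∃ d, 0 < d ∧ ∃ k, f (k + d) = f k :=
    ⟨j - i, by omega, i, by rw [show i + (j - i) = j from by omega]; exact heq.symm⟩
  obtain ⟨d, ⟨hdpos, m, hm⟩, hdm⟩ :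
      ∃ d, (0 < d ∧ ∃ k, f (k + d) = f k) ∧
        ∀ g, g < d → ¬(0 < g ∧ ∃ k, f (k + g) = f k) :=
    ⟨Nat.find hex, Nat.find_spec hex, fun g hg => Nat.find_min hex hg⟩
  have hmin : ∀ g, 0 < g → g < d → ∀ k, f (k + g) ≠ f k := by
    intro g hg hlt k h
    exact hdm g hlt ⟨hg, k, h⟩
  have hdle : d ≤ j - i := by
    by_contra hcon
    exact hdm (j - i) (by omega) ⟨by omega, i,
      by rw [show i + (j - i) = j from by omega]; exact heq.symm⟩
  have hdn : d < n := by omega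
  have hd1 : d ≠ 1 := by
    intro h
    rw [h] at hm
    exact (hcons m).1 hm.symm
  have hd2 : d ≠ 2 := by
    intro h
    rw [h] at hm
    have h2 : (f m).card = 2 := (he m).1
    obtain ⟨u, hu⟩ := Finset.card_pos.mp (show 0 < (f m).card by omega)
    have hu2 : u ∈ f m ∩ f (m + 2) := Finset.mem_inter.mpr ⟨hu, hm.symm ▸ hu⟩
    rw [hdisj m] at hu2
    exact absurd hu2 (Finset.notMem_empty u)
  have hd3 : 3 ≤ d := by omega
  obtain ⟨d₃, hd₃⟩ : ∃ d₃, d = d₃ + 3 := ⟨d - 3, by omega⟩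
  -- vertices p, q, r
  obtain ⟨q, hq⟩ := (hcons m).2.1
  rw [Finset.mem_inter] at hq
  obtain ⟨p, hpq, hfm⟩ := eq_pair_of_mem (he m).1 hq.1
  have hpn1 : p ∉ f (m + 1) := by
    intro hp
    have hsub : f m ⊆ f (m + 1) := by
      rw [hfm]
      intro u hu
      simp only [Finset.mem_insert, Finset.mem_singleton] at hu
      rcases hu with rfl | rfl
      · exact hp
      · exact hq.2
    exact (hcons m).1 (Finset.eq_of_subset_of_card_le hsub
      (le_of_eq ((he (m + 1)).1.trans (he m).1.symm)))
  obtain ⟨r, hrq, hfm1'⟩ := eq_pair_of_mem (he (m + 1)).1 hq.2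
  have hfm1 : f (m + 1) = {q, r} := by rw [hfm1']; exact Finset.pair_comm r q
  have hrp : r ≠ p := by
    intro h
    exact hpn1 (h ▸ (by rw [hfm1']; simp : r ∈ f (m + 1)))
  have hA : f m ∪ f (m + 1) ∈ T.faces := zig_union_face hzz' m
  have hAeq : f m ∪ f (m + 1) = {p, q, r} := by
    rw [hfm, hfm1]; ext u; simp
  have hfd : f (m + d₃ + 3) = f m := by
    rw [show m + d₃ + 3 = m + d from by omega]
    exact hm
  have hBmem : f (m + d₃ + 2) ∪ f (m + d₃ + 3) ∈ T.faces := by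
    have h' := zig_union_face hzz' (m + d₃ + 2)
    rwa [show m + d₃ + 2 + 1 = m + d₃ + 3 from by omega] at h'
  by_cases hABeq : f m ∪ f (m + 1) = f (m + d₃ + 2) ∪ f (m + d₃ + 3)
  · -- Case A = B
    have hsubA : f (m + d₃ + 2) ⊆ {p, q, r} := by
      rw [← hAeq, hABeq]
      exact Finset.subset_union_left
    rcases pair_subset_triple hsubA (he (m + d₃ + 2)).1 with hc | hc | hc
    · exact hmin (d₃ + 2) (by omega) (by omega) m
        (by rw [show m + (d₃ + 2) = m + d₃ + 2 from by omega, hc, ← hfm])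
    · exact hmin (d₃ + 1) (by omega) (by omega) (m + 1)
        (by rw [show m + 1 + (d₃ + 1) = m + d₃ + 2 from by omega, hc, ← hfm1])
    · -- f (m + d₃ + 2) = {p, r} : monodromy contradiction
      have hmono := hMF _ hA q r p (by rw [hAeq]; ext u; simp; tauto)
        hrq.symm hrp hpq.symm
      obtain ⟨-, -, Z', i', j', ⟨w, hwA, hwq, hwr, hw0⟩, hw1, hlt, hwj, -, -, hbet⟩ :=
        hmono
      have hwp : w = p := by
        rw [hAeq] at hwA
        simp only [Finset.mem_insert, Finset.mem_singleton] at hwA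
        tauto
      have hw0' : Z'.Passes i' p q := by rwa [hwp] at hw0
      have hdet : ∀ k, Z'.seq (i' + k) = f (m + k) :=
        zig_det Z'.isZigzag hzz' (hw0'.1.trans hfm.symm) (hw1.1.trans hfm1.symm)
      have hfg : f (m + (j' - i')) = f m := by
        have h' := hdet (j' - i')
        rw [show i' + (j' - i') = j' from by omega] at h'
        rw [← h', hwj.1, ← hfm]
      rcases Nat.lt_or_ge (j' - i') d with hltg | hgeg
      · exact hmin (j' - i') (by omega) hltg m hfg
      · refine hbet (i' + (d₃ + 2)) (by omega) (by omega) r p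
          (by rw [hAeq]; simp) (by rw [hAeq]; simp) ?_
        refine ⟨?_, hrp, ?_⟩
        · rw [hdet (d₃ + 2), show m + (d₃ + 2) = m + d₃ + 2 from by omega, hc]
          exact Finset.pair_comm p r
        · have h' := hdet (d₃ + 3)
          rw [show i' + (d₃ + 3) = i' + (d₃ + 2) + 1 from by omega] at h'
          rw [h', show m + (d₃ + 3) = m + d₃ + 3 from by omega, hfd, hfm]
          simp
  · -- Case A ≠ B
    have hCmem : f (m + d₃ + 3) ∪ f (m + d₃ + 4) ∈ T.faces := by
      have h' := zig_union_face hzz' (m + d₃ + 3)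
      rwa [show m + d₃ + 3 + 1 = m + d₃ + 4 from by omega] at h'
    have hBC : f (m + d₃ + 2) ∪ f (m + d₃ + 3) ≠ f (m + d₃ + 3) ∪ f (m + d₃ + 4) :=
      hdist (m + d₃ + 2) _ hBmem _ hCmem Finset.subset_union_left
        Finset.subset_union_right Finset.subset_union_left Finset.subset_union_right
    have hfmB : f m ⊆ f (m + d₃ + 2) ∪ f (m + d₃ + 3) := by
      rw [← hfd]; exact Finset.subset_union_right
    have hfmC : f m ⊆ f (m + d₃ + 3) ∪ f (m + d₃ + 4) := by
      rw [← hfd]; exact Finset.subset_union_left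
    have hCA : f (m + d₃ + 3) ∪ f (m + d₃ + 4) = f m ∪ f (m + 1) := by
      rcases face_cases (he m).1 hA Finset.subset_union_left hBmem hfmB hABeq
          hCmem hfmC with h' | h'
      · exact h'
      · exact absurd h'.symm hBC
    have hsub4 : f (m + d₃ + 4) ⊆ {p, q, r} := by
      rw [← hAeq, ← hCA]
      exact Finset.subset_union_right
    rcases pair_subset_triple hsub4 (he (m + d₃ + 4)).1 with hc4 | hc4 | hc4
    · -- f (m + d₃ + 4) = {p, q} = f (m + d₃ + 3) : consecutive edges equal
      apply (hcons (m + d₃ + 3)).1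
      rw [show m + d₃ + 3 + 1 = m + d₃ + 4 from by omega, hfd, hc4]
      exact hfm
    · -- f (m + d₃ + 4) = {q, r} = f (m + 1) : d is a global period, contradiction
      have hstart1 : f (m + d + 1) = f (m + 1) := by
        rw [show m + d + 1 = m + d₃ + 4 from by omega, hc4]
        exact hfm1.symm
      have hshift : ∀ t, f (m + d + t) = f (m + t) :=
        zig_det hzz' hzz' hm hstart1
      have hmn : m ≤ m * n := Nat.le_mul_of_pos_right m hnpos
      have hperiod : ∀ k, f (k + d) = f k := by
        intro k
        calc f (k + d) = f (k + d + m * n) := (hpermul m (k + d)).symm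
          _ = f (m + d + (k + m * n - m)) := by
              rw [show k + d + m * n = m + d + (k + m * n - m) from by omega]
          _ = f (m + (k + m * n - m)) := hshift _
          _ = f (k + m * n) := by
              rw [show m + (k + m * n - m) = k + m * n from by omega]
          _ = f k := hpermul m k
      have hle := Z.period_min d hdpos hperiod
      omega
    · -- f (m + d₃ + 4) = {p, r} : monodromy contradiction
      have hmono := hMF _ hA q r p (by rw [hAeq]; ext u; simp; tauto)
        hrq.symm hrp hpq.symm
      obtain ⟨-, -, Z', i', j', ⟨w, hwA, hwq, hwr, hw0⟩, hw1, hlt, hwj, -, -, hbet⟩ :=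
        hmono
      have hwp : w = p := by
        rw [hAeq] at hwA
        simp only [Finset.mem_insert, Finset.mem_singleton] at hwA
        tauto
      have hw0' : Z'.Passes i' p q := by rwa [hwp] at hw0
      have hdet : ∀ k, Z'.seq (i' + k) = f (m + k) :=
        zig_det Z'.isZigzag hzz' (hw0'.1.trans hfm.symm) (hw1.1.trans hfm1.symm)
      have hfg : f (m + (j' - i')) = f m := by
        have h' := hdet (j' - i')
        rw [show i' + (j' - i') = j' from by omega] at h'
        rw [← h', hwj.1, ← hfm]
      rcases Nat.lt_or_ge (j' - i') d with hltg | hgeg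
      · exact hmin (j' - i') (by omega) hltg m hfg
      · rcases Nat.eq_or_lt_of_le hgeg with heqd | hltd
        · -- j' - i' = d : orientation clash at the return edge
          have h' := hdet (d₃ + 4)
          rw [show i' + (d₃ + 4) = j' + 1 from by omega] at h'
          have hq' : q ∈ f (m + (d₃ + 4)) := h' ▸ hwj.2.2
          rw [show m + (d₃ + 4) = m + d₃ + 4 from by omega, hc4] at hq'
          simp only [Finset.mem_insert, Finset.mem_singleton] at hq'
          rcases hq' with h'' | h''
          · exact hpq h''.symm
          · exact hrq h''.symm
        · -- j' - i' > d : an intermediate pass through the face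
          refine hbet (i' + (d₃ + 3)) (by omega) (by omega) q p
            (by rw [hAeq]; simp) (by rw [hAeq]; simp) ?_
          refine ⟨?_, hpq.symm, ?_⟩
          · rw [hdet (d₃ + 3), show m + (d₃ + 3) = m + d₃ + 3 from by omega, hfd, hfm]
            exact Finset.pair_comm p q
          · have h' := hdet (d₃ + 4)
            rw [show i' + (d₃ + 4) = i' + (d₃ + 3) + 1 from by omega] at h'
            rw [h', show m + (d₃ + 4) = m + d₃ + 4 from by omega, hc4]
            simp

end Triangulation

/-- every zigzag is edge-simple iff `M_F = D_F⁻¹` for every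
face `F`. -/
theorem edge_simple_iff_MF_eq_DF_inv {V : Type} [Fintype V] [DecidableEq V]
    (T : Triangulation V) :
    (∀ Z : T.Zigzag, ∀ i j : ℕ, i < Z.period → j < Z.period → i ≠ j →
      Z.seq i ≠ Z.seq j) ↔ (∀ F ∈ T.faces, T.MFIsDInv F) := by
  constructor
  · exact fun h => Triangulation.edge_simple_imp h
  · intro hMF Z i j hi hj hij heq
    rcases Nat.lt_or_gt_of_ne hij with h | h
    · exact Triangulation.backward_aux hMF Z h hj heq
    · exact Triangulation.backward_aux hMF Z h hi heq.symm
end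

section
/- If a face F of a triangulation is locally z-knotted and its z-monodromy is the identity or D_F, then the unique zigzag through F (up to reversal) passes through each of the three edges of F exactly twice, both times in the same direction; specifically, it traverses twice each of the three oriented edges forming one cycle of D_F. -/
open Finset

namespace ZAux
open Triangulation
variable {V : Type} [Fintype V] [DecidableEq V] {T : Triangulation V}

lemma pair_subset {s : Finset V} {a b : V} (ha : a ∈ s) (hb : b ∈ s) :
    ({a, b} : Finset V) ⊆ s :=
  Finset.insert_subset_iff.2 ⟨ha, Finset.singleton_subset_iff.2 hb⟩

lemma inter_card_one {e e' : Finset V} (he : e.card = 2) (he' : e'.card = 2)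
    (hne : e ≠ e') (hmeet : (e ∩ e').Nonempty) : (e ∩ e').card = 1 := by
  have h1 : 1 ≤ (e ∩ e').card := Finset.card_pos.2 hmeet
  have h2 : (e ∩ e').card ≤ 2 := he ▸ Finset.card_le_card Finset.inter_subset_left
  have h3 : (e ∩ e').card ≠ 2 := by
    intro h
    have h4 : e ∩ e' = e := Finset.eq_of_subset_of_card_le Finset.inter_subset_left (by omega)
    have h5 : e ∩ e' = e' := Finset.eq_of_subset_of_card_le Finset.inter_subset_right (by omega)
    exact hne (h4.symm.trans h5)
  omega

lemma face_eq_union {A e e' : Finset V} (hA : A ∈ T.faces) (he : e.card = 2)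
    (he' : e'.card = 2) (hne : e ≠ e') (hmeet : (e ∩ e').Nonempty)
    (heA : e ⊆ A) (he'A : e' ⊆ A) : A = e ∪ e' := by
  have hA3 : A.card = 3 := T.card_eq A hA
  have hu : (e ∪ e').card = 3 := by
    have h := Finset.card_union_add_card_inter e e'
    have h1 := inter_card_one he he' hne hmeet
    omega
  exact (Finset.eq_of_subset_of_card_le (Finset.union_subset heA he'A) (by omega)).symm

lemma face_mem_pair {e A B C : Finset V} (he : e.card = 2)
    (hAm : A ∈ T.faces) (hBm : B ∈ T.faces) (hCm : C ∈ T.faces)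
    (heA : e ⊆ A) (heB : e ⊆ B) (heC : e ⊆ C) (hAB : A ≠ B) : C = A ∨ C = B := by
  have hfil : (T.faces.filter fun G => e ⊆ G).card = 2 :=
    T.edge_two_faces e he ⟨A, hAm, heA⟩
  have hA : A ∈ T.faces.filter fun G => e ⊆ G := Finset.mem_filter.2 ⟨hAm, heA⟩
  have hB : B ∈ T.faces.filter fun G => e ⊆ G := Finset.mem_filter.2 ⟨hBm, heB⟩
  have hsub : ({A, B} : Finset (Finset V)) ⊆ T.faces.filter fun G => e ⊆ G :=
    pair_subset hA hB
  have hcard : ({A, B} : Finset (Finset V)).card = 2 := Finset.card_pair hAB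
  have heq : ({A, B} : Finset (Finset V)) = T.faces.filter fun G => e ⊆ G :=
    Finset.eq_of_subset_of_card_le hsub (by omega)
  have hC : C ∈ ({A, B} : Finset (Finset V)) := by
    rw [heq]; exact Finset.mem_filter.2 ⟨hCm, heC⟩
  simpa using hC

lemma det {f g : ℕ → Finset V} (hf : T.IsZigzagSeq f) (hg : T.IsZigzagSeq g)
    (i j : ℕ) (h0 : f i = g j) (h1 : f (i+1) = g (j+1)) : f (i+2) = g (j+2) := by
  obtain ⟨hne, hint, B, hBm, hiB, hi1B⟩ := hf.2.1 i
  obtain ⟨hne1, hint1, A, hAm, h1A, h2A⟩ := hf.2.1 (i+1)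
  have hBA : B ≠ A := hf.2.2.1 i B hBm A hAm hiB hi1B h1A h2A
  obtain ⟨hne', hint', B', hB'm, hjB', hj1B'⟩ := hg.2.1 j
  obtain ⟨hne1', hint1', A', hA'm, h1A', h2A'⟩ := hg.2.1 (j+1)
  have hB'A' : B' ≠ A' := hg.2.2.1 j B' hB'm A' hA'm hjB' hj1B' h1A' h2A'
  have hei : (f i).card = 2 := (hf.1 i).1
  have hei1 : (f (i+1)).card = 2 := (hf.1 (i+1)).1
  have hBu : B = f i ∪ f (i+1) := face_eq_union hBm hei hei1 hne hint hiB hi1B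
  have hB'u : B' = f i ∪ f (i+1) := by
    have h := face_eq_union hB'm ((hg.1 j).1) ((hg.1 (j+1)).1) hne' hint' hjB' hj1B'
    rw [h, ← h0, ← h1]
  have hBB' : B' = B := hB'u.trans hBu.symm
  have hA'A : A' = A := by
    have h := face_mem_pair (e := f (i+1)) hei1 hBm hAm hA'm hi1B h1A
      (by rw [h1]; exact h1A') hBA
    rcases h with h | h
    · exact absurd (h.trans hBB'.symm) (Ne.symm hB'A')
    · exact h
  have hA3 : A.card = 3 := T.card_eq A hAm
  obtain ⟨vtx, hv⟩ := hint
  have hvA : vtx ∈ A := h1A (Finset.mem_inter.1 hv).2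
  have hcard : (A \ f i).card ≤ 2 := by
    have hsub : A \ f i ⊆ A.erase vtx := by
      intro x hx
      rcases Finset.mem_sdiff.1 hx with ⟨hxA, hxf⟩
      exact Finset.mem_erase.2 ⟨fun h => hxf (h ▸ (Finset.mem_inter.1 hv).1), hxA⟩
    calc (A \ f i).card ≤ (A.erase vtx).card := Finset.card_le_card hsub
      _ = 2 := by rw [Finset.card_erase_of_mem hvA, hA3]
  have key : ∀ x : Finset V, x ⊆ A → f i ∩ x = ∅ → x.card = 2 → x = A \ f i := by
    intro x hxA hxd hx2
    refine Finset.eq_of_subset_of_card_le ?_ (by omega)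
    intro y hy
    refine Finset.mem_sdiff.2 ⟨hxA hy, fun hyf => ?_⟩
    have hmem : y ∈ f i ∩ x := Finset.mem_inter.2 ⟨hyf, hy⟩
    simp [hxd] at hmem
  have e1 : f (i+2) = A \ f i := key _ h2A (hf.2.2.2 i) ((hf.1 (i+2)).1)
  have e2 : g (j+2) = A \ f i := by
    refine key _ (by rw [← hA'A]; exact h2A') ?_ ((hg.1 (j+2)).1)
    rw [h0]; exact hg.2.2.2 j
  rw [e1, e2]

lemma sync {f g : ℕ → Finset V} (hf : T.IsZigzagSeq f) (hg : T.IsZigzagSeq g)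
    (i j : ℕ) (h0 : f i = g j) (h1 : f (i+1) = g (j+1)) :
    ∀ t, f (i + t) = g (j + t) := by
  have key : ∀ t, f (i + t) = g (j + t) ∧ f (i + t + 1) = g (j + t + 1) := by
    intro t
    induction t with
    | zero => exact ⟨h0, h1⟩
    | succ n ih => exact ⟨ih.2, det hf hg (i + n) (j + n) ih.1 ih.2⟩
  exact fun t => (key t).1

lemma seq_add_mul (Z : T.Zigzag) (n m : ℕ) : Z.seq (n + Z.period * m) = Z.seq n := by
  induction m with
  | zero => simp
  | succ k ih =>
    have h : n + Z.period * (k+1) = (n + Z.period * k) + Z.period := by ring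
    rw [h, Z.periodic, ih]

lemma seq_mod (Z : T.Zigzag) (k : ℕ) : Z.seq k = Z.seq (k % Z.period) := by
  conv_lhs => rw [← Nat.mod_add_div k Z.period]
  exact seq_add_mul Z _ _

lemma seq_congr (Z : T.Zigzag) {j k : ℕ} (h : j % Z.period = k % Z.period) :
    Z.seq j = Z.seq k := by rw [seq_mod Z j, h, ← seq_mod Z k]

lemma passes_congr (Z : T.Zigzag) {j k : ℕ} (h : j % Z.period = k % Z.period)
    (u v : V) : Z.Passes j u v ↔ Z.Passes k u v := by
  have h1 : (j+1) % Z.period = (k+1) % Z.period := Nat.ModEq.add_right 1 h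
  unfold Zigzag.Passes
  rw [seq_congr Z h, seq_congr Z h1]

lemma exists_rep (p i0 k : ℕ) (hp : 0 < p) :
    ∃ j, i0 ≤ j ∧ j < i0 + p ∧ j % p = k % p := by
  have h4 : (k % p + p * (i0 / p)) % p = k % p := by
    rw [Nat.add_mul_mod_self_left]
    exact Nat.mod_mod_of_dvd k dvd_rfl
  have h5 : (k % p + p * (i0 / p) + p) % p = k % p := by
    rw [Nat.add_mod_right]; exact h4
  have h1 : k % p < p := Nat.mod_lt _ hp
  have h3 : p * (i0 / p) + i0 % p = i0 := Nat.div_add_mod i0 p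
  have h2 : i0 % p < p := Nat.mod_lt _ hp
  set K := k % p with hK
  set Q := p * (i0 / p) with hQ
  by_cases h : i0 ≤ K + Q
  · exact ⟨K + Q, h, by omega, h4⟩
  · exact ⟨K + Q + p, by omega, by omega, h5⟩

lemma noFF {F : Finset V} (hF3 : F.card = 3) {f : ℕ → Finset V}
    (hf : T.IsZigzagSeq f) (k : ℕ) (h1 : f k ⊆ F) (h2 : f (k+2) ⊆ F) : False := by
  have hd : Disjoint (f k) (f (k+2)) := Finset.disjoint_iff_inter_eq_empty.2 (hf.2.2.2 k)
  have hcards := Finset.card_union_of_disjoint hd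
  have hle : (f k ∪ f (k+2)).card ≤ 3 := hF3 ▸ Finset.card_le_card (Finset.union_subset h1 h2)
  have c1 := (hf.1 k).1
  have c2 := (hf.1 (k+2)).1
  omega

lemma crossing_extend {F : Finset V} (hF : F ∈ T.faces) {f : ℕ → Finset V}
    (hf : T.IsZigzagSeq f) (k : ℕ) (h1 : f (k+1) ⊆ F) :
    f k ⊆ F ∨ f (k+2) ⊆ F := by
  obtain ⟨hne, hint, B, hBm, hkB, hk1B⟩ := hf.2.1 k
  obtain ⟨hne1, hint1, A, hAm, h1A, h2A⟩ := hf.2.1 (k+1)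
  have hBA : B ≠ A := hf.2.2.1 k B hBm A hAm hkB hk1B h1A h2A
  have h := face_mem_pair (e := f (k+1)) ((hf.1 (k+1)).1) hBm hAm hF hk1B h1A h1 hBA
  rcases h with h | h
  · left; rw [← h] at hkB; exact hkB
  · right; rw [← h] at h2A; exact h2A

lemma pass_iff (Z : T.Zigzag) (k : ℕ) (q r : V) (hqr : q ≠ r)
    (hk : Z.seq k = {q, r}) (hr : r ∈ Z.seq (k+1)) (hq : q ∉ Z.seq (k+1)) :
    ∀ u v, Z.Passes k u v ↔ u = q ∧ v = r := by
  intro u v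
  constructor
  · rintro ⟨h1, h2, h3⟩
    have heq : ({u, v} : Finset V) = {q, r} := h1.symm.trans hk
    have hv : v ∈ ({q, r} : Finset V) := by
      rw [← heq]; simp
    have hvr : v = r := by
      rcases Finset.mem_insert.1 hv with h | h
      · exact absurd (by rw [← h]; exact h3) hq
      · exact Finset.mem_singleton.1 h
    have hu : u ∈ ({q, r} : Finset V) := by rw [← heq]; simp
    have huq : u = q := by
      rcases Finset.mem_insert.1 hu with h | h
      · exact h
      · exact absurd ((Finset.mem_singleton.1 h).trans hvr.symm) h2
    exact ⟨huq, hvr⟩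
  · rintro ⟨rfl, rfl⟩; exact ⟨hk, hqr, hr⟩

lemma cr_next_mem (Z : T.Zigzag) (m : ℕ) (r : V)
    (hr : r ∈ Z.seq m) : r ∉ Z.seq (m+2) := by
  intro h
  have hz := Z.isZigzag.2.2.2 m
  have hm : r ∈ Z.seq m ∩ Z.seq (m+2) := Finset.mem_inter.2 ⟨hr, h⟩
  rw [hz] at hm
  simp at hm

lemma cr_snd (Z : T.Zigzag) (m : ℕ) {q r s : V} (hrs : r ≠ s)
    (h0 : Z.seq m = {q, r}) (h1 : Z.seq (m+1) = {r, s}) :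
    s ∈ Z.seq (m+2) ∧ r ∉ Z.seq (m+2) := by
  have hrn : r ∉ Z.seq (m+2) := cr_next_mem Z m r (by rw [h0]; simp)
  obtain ⟨γ, hγ⟩ := (Z.isZigzag.2.1 (m+1)).2.1
  have hγ1 : γ ∈ ({r, s} : Finset V) := by
    rw [← h1]; exact (Finset.mem_inter.1 hγ).1
  have hγ2 : γ ∈ Z.seq (m+2) := (Finset.mem_inter.1 hγ).2
  rcases Finset.mem_insert.1 hγ1 with rfl | h
  · exact absurd hγ2 hrn
  · rw [Finset.mem_singleton.1 h] at hγ2; exact ⟨hγ2, hrn⟩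

lemma cr_passes (Z : T.Zigzag) (m : ℕ) {q r s : V} (hqr : q ≠ r) (hrs : r ≠ s) (hqs : q ≠ s)
    (h0 : Z.seq m = {q, r}) (h1 : Z.seq (m+1) = {r, s}) :
    (∀ u v, Z.Passes m u v ↔ u = q ∧ v = r) ∧
    (∀ u v, Z.Passes (m+1) u v ↔ u = r ∧ v = s) := by
  constructor
  · exact pass_iff Z m q r hqr h0 (by rw [h1]; simp) (by rw [h1]; simp [hqr, hqs])
  · obtain ⟨hs', hr'⟩ := cr_snd Z m hrs h0 h1
    exact pass_iff Z (m+1) r s hrs h1 hs' hr'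

lemma get_pair {s : Finset V} (h2 : s.card = 2) {b : V} (hb : b ∈ s) :
    ∃ a, a ≠ b ∧ s = {a, b} := by
  obtain ⟨x, y, hxy, rfl⟩ := Finset.card_eq_two.1 h2
  rcases Finset.mem_insert.1 hb with rfl | hb'
  · exact ⟨y, hxy.symm, Finset.pair_comm b y⟩
  · have h : b = y := Finset.mem_singleton.1 hb'
    subst h
    exact ⟨x, hxy, rfl⟩

lemma initial_crossing {F : Finset V} (hF : F ∈ T.faces) (Z : T.Zigzag)
    (hZ : Z.Meets F) :
    ∃ m a b c, ({a, b, c} : Finset V) = F ∧ a ≠ b ∧ b ≠ c ∧ a ≠ c ∧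
      Z.seq m = {a, b} ∧ Z.seq (m+1) = {b, c} := by
  have hF3 : F.card = 3 := T.card_eq F hF
  obtain ⟨k, hk⟩ := hZ
  have hp0 : 0 < Z.period := Z.period_pos
  set t := k + Z.period - 1 with ht
  have ht1 : t + 1 = k + Z.period := by omega
  have hft1 : Z.seq (t + 1) ⊆ F := by rw [ht1, Z.periodic]; exact hk
  have hm : ∃ m, Z.seq m ⊆ F ∧ Z.seq (m+1) ⊆ F := by
    rcases crossing_extend hF Z.isZigzag t hft1 with h | h
    · exact ⟨t, h, hft1⟩
    · exact ⟨t + 1, hft1, h⟩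
  obtain ⟨m, hm1, hm2⟩ := hm
  have h2 : (Z.seq m).card = 2 := (Z.isZigzag.1 m).1
  have h2' : (Z.seq (m+1)).card = 2 := (Z.isZigzag.1 (m+1)).1
  have hne : Z.seq m ≠ Z.seq (m+1) := (Z.isZigzag.2.1 m).1
  obtain ⟨bb, hbb⟩ := (Z.isZigzag.2.1 m).2.1
  have hbm : bb ∈ Z.seq m := (Finset.mem_inter.1 hbb).1
  have hbm1 : bb ∈ Z.seq (m+1) := (Finset.mem_inter.1 hbb).2
  obtain ⟨a, hab, hma⟩ := get_pair h2 hbm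
  obtain ⟨c', hc', hmc'⟩ := get_pair h2' hbm1
  have hmc : Z.seq (m+1) = {bb, c'} := by rw [hmc']; exact Finset.pair_comm c' bb
  have hac : a ≠ c' := by
    intro h
    apply hne
    rw [hma, hmc, h]
    exact Finset.pair_comm c' bb
  have hsub : ({a, bb, c'} : Finset V) ⊆ F := by
    intro x hx
    rcases Finset.mem_insert.1 hx with rfl | hx
    · exact hm1 (by rw [hma]; simp)
    rcases Finset.mem_insert.1 hx with rfl | hx
    · exact hm1 (by rw [hma]; simp)
    · have h : x = c' := Finset.mem_singleton.1 hx
      subst h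
      exact hm2 (by rw [hmc]; simp)
  have hcard3 : ({a, bb, c'} : Finset V).card = 3 := by
    rw [Finset.card_insert_of_notMem (by simp [hab, hac]), Finset.card_pair (Ne.symm hc')]
  exact ⟨m, a, bb, c', Finset.eq_of_subset_of_card_le hsub (by omega),
    hab, Ne.symm hc', hac, hma, hmc⟩

lemma step_gen {F : Finset V} (hF : F ∈ T.faces) (Z : T.Zigzag) (m : ℕ)
    (q r s u v w : V)
    (hqrs : ({q, r, s} : Finset V) = F) (hqr : q ≠ r) (hrs : r ≠ s) (hqs : q ≠ s)
    (huvw : ({u, v, w} : Finset V) = F) (huv : u ≠ v) (hvw : v ≠ w) (huw : u ≠ w)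
    (hmono : T.MonodromyRel F r s u v)
    (h0 : Z.seq m = {q, r}) (h1 : Z.seq (m+1) = {r, s}) :
    ∃ m', m + 1 < m' ∧ Z.seq m' = {u, v} ∧ Z.seq (m'+1) = {v, w} ∧
      ∀ k, m + 1 < k → k < m' → ¬ Z.seq k ⊆ F := by
  have hF3 : F.card = 3 := T.card_eq F hF
  have hqF : q ∈ F := by rw [← hqrs]; simp
  have hrF' : r ∈ F := by rw [← hqrs]; simp
  obtain ⟨hrF, hsF, W, i, j, ⟨z, hzF, hz1, hz2, hPz⟩, hPrs, hij, hPj, huF, hvF, hbet⟩ := hmono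
  have hz : z = q := by
    have hz' : z ∈ ({q, r, s} : Finset V) := by rw [hqrs]; exact hzF
    rcases Finset.mem_insert.1 hz' with h | h
    · exact h
    rcases Finset.mem_insert.1 h with h | h
    · exact absurd h hz1
    · exact absurd (Finset.mem_singleton.1 h) hz2
  subst hz
  obtain ⟨hWi, hzr, hrW⟩ := hPz
  obtain ⟨hWi1, hrs', hsW⟩ := hPrs
  have hsync : ∀ t, W.seq (i + t) = Z.seq (m + t) :=
    sync W.isZigzag Z.isZigzag i m (by rw [hWi, h0]) (by rw [hWi1, h1])
  obtain ⟨hWj, huv', hvW⟩ := hPj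
  set m' := m + (j - i) with hm'def
  have hm'2 : m + 1 < m' := by omega
  have hseq' : Z.seq m' = {u, v} := by
    have h := hsync (j - i)
    rw [show i + (j - i) = j from by omega] at h
    rw [← h]; exact hWj
  have hseq'1 : Z.seq (m' + 1) = W.seq (j + 1) := by
    have h := hsync (j - i + 1)
    rw [show i + (j - i + 1) = j + 1 from by omega] at h
    rw [show m' + 1 = m + (j - i + 1) from by omega]
    exact h.symm
  have hvm' : v ∈ Z.seq (m' + 1) := by rw [hseq'1]; exact hvW
  have hbet' : ∀ k, m + 1 < k → k < m' → ¬ Z.seq k ⊆ F := by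
    intro k hk1 hk2 hkF
    have hkW : W.seq (i + (k - m)) = Z.seq k := by
      have h := hsync (k - m)
      rw [show m + (k - m) = k from by omega] at h
      exact h
    obtain ⟨α, β, hαβ, hEq⟩ := Finset.card_eq_two.1 ((Z.isZigzag.1 k).1)
    have hαF : α ∈ F := hkF (by rw [hEq]; simp)
    have hβF : β ∈ F := hkF (by rw [hEq]; simp)
    obtain ⟨γ, hγ⟩ := (W.isZigzag.2.1 (i + (k - m))).2.1
    have hγ1 : γ ∈ Z.seq k := by rw [← hkW]; exact (Finset.mem_inter.1 hγ).1
    have hγ2 : γ ∈ W.seq (i + (k - m) + 1) := (Finset.mem_inter.1 hγ).2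
    have hik : i + 1 < i + (k - m) := by omega
    have hkj : i + (k - m) < j := by omega
    rw [hEq] at hγ1
    rcases Finset.mem_insert.1 hγ1 with rfl | hγ1'
    · exact hbet _ hik hkj β γ hβF hαF
        ⟨by rw [hkW, hEq]; exact Finset.pair_comm γ β, hαβ.symm, hγ2⟩
    · have hγβ : γ = β := Finset.mem_singleton.1 hγ1'
      subst hγβ
      exact hbet _ hik hkj α γ hαF hβF ⟨by rw [hkW, hEq], hαβ, hγ2⟩
  have hm'F : Z.seq m' ⊆ F := by rw [hseq']; exact pair_subset huF hvF
  have hnext : Z.seq (m' + 1) ⊆ F := by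
    have hext := crossing_extend hF Z.isZigzag (m' - 1)
      (by rw [show m' - 1 + 1 = m' from by omega]; exact hm'F)
    rw [show m' - 1 + 2 = m' + 1 from by omega] at hext
    rcases hext with h | h
    · exfalso
      by_cases hc : m' = m + 2
      · exact noFF hF3 Z.isZigzag m (by rw [h0]; exact pair_subset hqF hrF')
          (by rw [show m + 2 = m' from hc.symm]; exact hm'F)
      · exact hbet' (m' - 1) (by omega) (by omega) h
    · exact h
  have hfin : Z.seq (m' + 1) = {v, w} := by
    have hne2 := (Z.isZigzag.2.1 m').1
    have hcard : (Z.seq (m' + 1)).card = 2 := (Z.isZigzag.1 (m'+1)).1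
    have hun : u ∉ Z.seq (m' + 1) := by
      intro hu
      apply hne2
      rw [hseq']
      exact Finset.eq_of_subset_of_card_le (pair_subset hu hvm')
        (by rw [hcard, Finset.card_pair huv])
    have hsubVW : Z.seq (m' + 1) ⊆ ({v, w} : Finset V) := by
      intro x hx
      have hxF : x ∈ ({u, v, w} : Finset V) := by rw [huvw]; exact hnext hx
      rcases Finset.mem_insert.1 hxF with rfl | h
      · exact absurd hx hun
      · exact h
    exact Finset.eq_of_subset_of_card_le hsubVW
      (by rw [hcard, Finset.card_pair hvw])
  exact ⟨m', hm'2, hseq', hfin, hbet'⟩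

lemma window {F : Finset V} {f : ℕ → Finset V} {i0 i1 i2 i3 : ℕ}
    (h01 : i0 + 1 < i1) (h12 : i1 + 1 < i2) (h23 : i2 + 1 < i3)
    (b1 : ∀ k, i0 + 1 < k → k < i1 → ¬ f k ⊆ F)
    (b2 : ∀ k, i1 + 1 < k → k < i2 → ¬ f k ⊆ F)
    (b3 : ∀ k, i2 + 1 < k → k < i3 → ¬ f k ⊆ F) :
    ∀ k, i0 ≤ k → k < i3 → f k ⊆ F →
      k = i0 ∨ k = i0 + 1 ∨ k = i1 ∨ k = i1 + 1 ∨ k = i2 ∨ k = i2 + 1 := by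
  intro k hk1 hk2 hkF
  by_contra hcon
  push_neg at hcon
  obtain ⟨n1, n2, n3, n4, n5, n6⟩ := hcon
  rcases (by omega : (i0 + 1 < k ∧ k < i1) ∨ (i1 + 1 < k ∧ k < i2) ∨ (i2 + 1 < k ∧ k < i3))
    with ⟨h, h'⟩ | ⟨h, h'⟩ | ⟨h, h'⟩
  exacts [b1 k h h' hkF, b2 k h h' hkF, b3 k h h' hkF]

lemma period_eq {F : Finset V} (hF3 : F.card = 3) (Z : T.Zigzag) {a b c : V}
    {i0 i1 i2 i3 : ℕ}
    (habF : ({a, b} : Finset V) ⊆ F) (hbcF : ({b, c} : Finset V) ⊆ F)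
    (h01 : i0 + 1 < i1) (h12 : i1 + 1 < i2) (h23 : i2 + 1 < i3)
    (c0 : Z.seq i0 = {a, b}) (c0' : Z.seq (i0+1) = {b, c})
    (c3 : Z.seq i3 = {a, b}) (c3' : Z.seq (i3+1) = {b, c})
    (e1 : Z.seq i1 ⊆ F) (e2 : Z.seq i2 ⊆ F)
    (n1 : Z.seq i1 ≠ {a, b}) (n2 : Z.seq i2 ≠ {a, b})
    (b1 : ∀ k, i0 + 1 < k → k < i1 → ¬ Z.seq k ⊆ F)
    (b2 : ∀ k, i1 + 1 < k → k < i2 → ¬ Z.seq k ⊆ F)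
    (b3 : ∀ k, i2 + 1 < k → k < i3 → ¬ Z.seq k ⊆ F) :
    i0 + Z.period = i3 := by
  have hp0 : 0 < Z.period := Z.period_pos
  have hd0 : 0 < i3 - i0 := by omega
  have hsync : ∀ t, Z.seq (i0 + t) = Z.seq (i3 + t) :=
    sync Z.isZigzag Z.isZigzag i0 i3 (c0.trans c3.symm) (c0'.trans c3'.symm)
  have hglob : ∀ n, Z.seq (n + (i3 - i0)) = Z.seq n := by
    intro n
    have hle : i0 ≤ Z.period * i0 := Nat.le_mul_of_pos_left i0 hp0
    set P := Z.period * i0 with hP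
    have e1' : Z.seq (n + (i3 - i0)) = Z.seq (n + (i3 - i0) + P) := by
      rw [hP]; exact (seq_add_mul Z _ _).symm
    have e2' : Z.seq (n + P) = Z.seq n := by rw [hP]; exact seq_add_mul Z _ _
    have key : Z.seq (i3 + (n + P - i0)) = Z.seq (i0 + (n + P - i0)) := (hsync _).symm
    rw [e1', show n + (i3 - i0) + P = i3 + (n + P - i0) from by omega, key,
      show i0 + (n + P - i0) = n + P from by omega, e2']
  have hple : Z.period ≤ i3 - i0 := Z.period_min _ hd0 hglob
  have hp2 : 2 ≤ Z.period := by
    rcases Nat.lt_or_ge Z.period 2 with h | h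
    · exfalso
      have hp1 : Z.period = 1 := by omega
      have hne01 := (Z.isZigzag.2.1 0).1
      have h1 : Z.seq (0 + Z.period) = Z.seq 0 := Z.periodic 0
      rw [hp1] at h1
      exact hne01 ((by simpa using h1 : Z.seq 1 = Z.seq 0)).symm
    · exact h
  have hc : Z.seq (i0 + Z.period) = {a, b} := (Z.periodic i0).trans c0
  have hc' : Z.seq (i0 + Z.period + 1) = {b, c} := by
    have h := Z.periodic (i0 + 1)
    rw [show i0 + Z.period + 1 = i0 + 1 + Z.period from by omega]
    exact h.trans c0'
  by_contra hne'
  have hlt : i0 + Z.period < i3 := by omega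
  have hwin := window h01 h12 h23 b1 b2 b3 (i0 + Z.period) (by omega) hlt
    (by rw [hc]; exact habF)
  rcases hwin with h | h | h | h | h | h
  · omega
  · omega
  · exact n1 (by rw [← h]; exact hc)
  · exact noFF hF3 Z.isZigzag i1 e1
      (by rw [show i1 + 2 = i0 + Z.period + 1 from by omega, hc']; exact hbcF)
  · exact n2 (by rw [← h]; exact hc)
  · exact noFF hF3 Z.isZigzag i2 e2
      (by rw [show i2 + 2 = i0 + Z.period + 1 from by omega, hc']; exact hbcF)

open scoped Classical in
lemma count_edge (Z : T.Zigzag) (i0 i3 s1 s2 : ℕ) (u v : V)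
    (hpe : i0 + Z.period = i3)
    (hs1 : i0 ≤ s1) (hs12 : s1 < s2) (hs2 : s2 < i3)
    (hP1 : Z.Passes s1 u v) (hP2 : Z.Passes s2 u v)
    (hexcl : ∀ k, i0 ≤ k → k < i3 → Z.Passes k u v → k = s1 ∨ k = s2)
    (hnr : ∀ k, i0 ≤ k → k < i3 → ¬ Z.Passes k v u) :
    ((Finset.range Z.period).filter fun i => Z.Passes i u v).card = 2 ∧
      ∀ i, ¬ Z.Passes i v u := by
  have hp0 : 0 < Z.period := Z.period_pos
  constructor
  · have hfe : ((Finset.range Z.period).filter fun i => Z.Passes i u v)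
        = {s1 % Z.period, s2 % Z.period} := by
      ext k
      simp only [Finset.mem_filter, Finset.mem_range, Finset.mem_insert, Finset.mem_singleton]
      constructor
      · rintro ⟨hk, hPk⟩
        obtain ⟨j, hj1, hj2, hj3⟩ := exists_rep Z.period i0 k hp0
        have hPj : Z.Passes j u v := (passes_congr Z hj3 u v).2 hPk
        have hkk : k % Z.period = k := Nat.mod_eq_of_lt hk
        rcases hexcl j hj1 (by omega) hPj with h | h
        · left; subst h; exact (hj3.trans hkk).symm
        · right; subst h; exact (hj3.trans hkk).symm
      · intro h
        have hmm : ∀ s : ℕ, (s % Z.period) % Z.period = s % Z.period :=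
          fun s => Nat.mod_mod_of_dvd s dvd_rfl
        rcases h with rfl | rfl
        · exact ⟨Nat.mod_lt _ hp0, (passes_congr Z (hmm s1) u v).2 hP1⟩
        · exact ⟨Nat.mod_lt _ hp0, (passes_congr Z (hmm s2) u v).2 hP2⟩
    rw [hfe]
    have hnep : s1 % Z.period ≠ s2 % Z.period := by
      intro h
      have hdvd : Z.period ∣ s2 - s1 := (Nat.modEq_iff_dvd' (le_of_lt hs12)).1 h
      have hle := Nat.le_of_dvd (by omega) hdvd
      omega
    rw [Finset.card_insert_of_notMem (by simpa using hnep), Finset.card_singleton]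
  · intro i hPi
    obtain ⟨j, hj1, hj2, hj3⟩ := exists_rep Z.period i0 i hp0
    exact hnr j hj1 (by omega) ((passes_congr Z hj3 v u).2 hPi)

open scoped Classical in
lemma final {F : Finset V} (hF : F ∈ T.faces) (Z : T.Zigzag) (a b c : V)
    (habc : ({a, b, c} : Finset V) = F) (hab : a ≠ b) (hbc : b ≠ c) (hac : a ≠ c)
    (i0 i1 i2 i3 : ℕ)
    (h01 : i0 + 1 < i1) (h12 : i1 + 1 < i2) (h23 : i2 + 1 < i3)
    (c0 : Z.seq i0 = {a, b}) (c0' : Z.seq (i0+1) = {b, c})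
    (c3 : Z.seq i3 = {a, b}) (c3' : Z.seq (i3+1) = {b, c})
    (b1 : ∀ k, i0 + 1 < k → k < i1 → ¬ Z.seq k ⊆ F)
    (b2 : ∀ k, i1 + 1 < k → k < i2 → ¬ Z.seq k ⊆ F)
    (b3 : ∀ k, i2 + 1 < k → k < i3 → ¬ Z.seq k ⊆ F)
    (hcase : (Z.seq i1 = {b, c} ∧ Z.seq (i1+1) = {c, a} ∧
              Z.seq i2 = {c, a} ∧ Z.seq (i2+1) = {a, b})
           ∨ (Z.seq i1 = {c, a} ∧ Z.seq (i1+1) = {a, b} ∧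
              Z.seq i2 = {b, c} ∧ Z.seq (i2+1) = {c, a})) :
    ∀ u v : V, ((u, v) = (a, b) ∨ (u, v) = (b, c) ∨ (u, v) = (c, a)) →
      ((Finset.range Z.period).filter fun i => Z.Passes i u v).card = 2 ∧
        ∀ i, ¬ Z.Passes i v u := by
  have hF3 : F.card = 3 := T.card_eq F hF
  have haF : a ∈ F := by rw [← habc]; simp
  have hbF : b ∈ F := by rw [← habc]; simp
  have hcF : c ∈ F := by rw [← habc]; simp
  have hwin := window (F := F) (f := Z.seq) h01 h12 h23 b1 b2 b3
  obtain ⟨P0, P0'⟩ := cr_passes Z i0 hab hbc hac c0 c0'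
  have d1 : ({b, c} : Finset V) ≠ {a, b} := by
    intro h
    have ha' : a ∈ ({b, c} : Finset V) := by rw [h]; simp
    rcases Finset.mem_insert.1 ha' with h' | h'
    · exact hab h'
    · exact hac (Finset.mem_singleton.1 h')
  have d2 : ({c, a} : Finset V) ≠ {a, b} := by
    intro h
    have hc' : c ∈ ({a, b} : Finset V) := by rw [← h]; simp
    rcases Finset.mem_insert.1 hc' with h' | h'
    · exact hac h'.symm
    · exact hbc (Finset.mem_singleton.1 h').symm
  rcases hcase with ⟨e1, e1', e2, e2'⟩ | ⟨e1, e1', e2, e2'⟩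
  · -- M1 pattern: crossings (a,b,c), (b,c,a), (c,a,b)
    obtain ⟨P1, P1'⟩ := cr_passes Z i1 hbc (Ne.symm hac) (Ne.symm hab) e1 e1'
    obtain ⟨P2, P2'⟩ := cr_passes Z i2 (Ne.symm hac) hab (Ne.symm hbc) e2 e2'
    have hpe : i0 + Z.period = i3 :=
      period_eq hF3 Z (pair_subset haF hbF) (pair_subset hbF hcF) h01 h12 h23
        c0 c0' c3 c3' (by rw [e1]; exact pair_subset hbF hcF)
        (by rw [e2]; exact pair_subset hcF haF)
        (by rw [e1]; exact d1) (by rw [e2]; exact d2) b1 b2 b3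
    intro u v huv
    rcases huv with h | h | h <;> rw [Prod.mk.injEq] at h <;> obtain ⟨rfl, rfl⟩ := h
    · refine count_edge Z i0 i3 i0 (i2+1) u v hpe (le_refl i0) (by omega) (by omega)
        ((P0 u v).2 ⟨rfl, rfl⟩) ((P2' u v).2 ⟨rfl, rfl⟩) ?_ ?_
      · intro k hk1 hk2 hPk
        have hkF : Z.seq k ⊆ F := by rw [hPk.1]; exact pair_subset haF hbF
        rcases hwin k hk1 hk2 hkF with rfl | rfl | rfl | rfl | rfl | rfl <;>
          simp only [P0, P0', P1, P1', P2, P2'] at hPk <;>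
          first
          | (left; rfl)
          | (right; rfl)
          | (obtain ⟨h9, h10⟩ := hPk
             first
             | exact absurd h9 hab | exact absurd h10 hab
             | exact absurd h9 hbc | exact absurd h10 hbc
             | exact absurd h9 hac | exact absurd h10 hac
             | exact absurd h9.symm hab | exact absurd h10.symm hab
             | exact absurd h9.symm hbc | exact absurd h10.symm hbc
             | exact absurd h9.symm hac | exact absurd h10.symm hac)
      · intro k hk1 hk2 hPk
        have hkF : Z.seq k ⊆ F := by rw [hPk.1]; exact pair_subset hbF haF
        rcases hwin k hk1 hk2 hkF with rfl | rfl | rfl | rfl | rfl | rfl <;>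
          simp only [P0, P0', P1, P1', P2, P2'] at hPk <;>
          (obtain ⟨h9, h10⟩ := hPk
           first
           | exact absurd h9 hab | exact absurd h10 hab
           | exact absurd h9 hbc | exact absurd h10 hbc
           | exact absurd h9 hac | exact absurd h10 hac
           | exact absurd h9.symm hab | exact absurd h10.symm hab
           | exact absurd h9.symm hbc | exact absurd h10.symm hbc
           | exact absurd h9.symm hac | exact absurd h10.symm hac)
    · refine count_edge Z i0 i3 (i0+1) i1 u v hpe (by omega) (by omega) (by omega)
        ((P0' u v).2 ⟨rfl, rfl⟩) ((P1 u v).2 ⟨rfl, rfl⟩) ?_ ?_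
      · intro k hk1 hk2 hPk
        have hkF : Z.seq k ⊆ F := by rw [hPk.1]; exact pair_subset hbF hcF
        rcases hwin k hk1 hk2 hkF with rfl | rfl | rfl | rfl | rfl | rfl <;>
          simp only [P0, P0', P1, P1', P2, P2'] at hPk <;>
          first
          | (left; rfl)
          | (right; rfl)
          | (obtain ⟨h9, h10⟩ := hPk
             first
             | exact absurd h9 hab | exact absurd h10 hab
             | exact absurd h9 hbc | exact absurd h10 hbc
             | exact absurd h9 hac | exact absurd h10 hac
             | exact absurd h9.symm hab | exact absurd h10.symm hab
             | exact absurd h9.symm hbc | exact absurd h10.symm hbc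
             | exact absurd h9.symm hac | exact absurd h10.symm hac)
      · intro k hk1 hk2 hPk
        have hkF : Z.seq k ⊆ F := by rw [hPk.1]; exact pair_subset hcF hbF
        rcases hwin k hk1 hk2 hkF with rfl | rfl | rfl | rfl | rfl | rfl <;>
          simp only [P0, P0', P1, P1', P2, P2'] at hPk <;>
          (obtain ⟨h9, h10⟩ := hPk
           first
           | exact absurd h9 hab | exact absurd h10 hab
           | exact absurd h9 hbc | exact absurd h10 hbc
           | exact absurd h9 hac | exact absurd h10 hac
           | exact absurd h9.symm hab | exact absurd h10.symm hab
           | exact absurd h9.symm hbc | exact absurd h10.symm hbc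
           | exact absurd h9.symm hac | exact absurd h10.symm hac)
    · refine count_edge Z i0 i3 (i1+1) i2 u v hpe (by omega) (by omega) (by omega)
        ((P1' u v).2 ⟨rfl, rfl⟩) ((P2 u v).2 ⟨rfl, rfl⟩) ?_ ?_
      · intro k hk1 hk2 hPk
        have hkF : Z.seq k ⊆ F := by rw [hPk.1]; exact pair_subset hcF haF
        rcases hwin k hk1 hk2 hkF with rfl | rfl | rfl | rfl | rfl | rfl <;>
          simp only [P0, P0', P1, P1', P2, P2'] at hPk <;>
          first
          | (left; rfl)
          | (right; rfl)
          | (obtain ⟨h9, h10⟩ := hPk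
             first
             | exact absurd h9 hab | exact absurd h10 hab
             | exact absurd h9 hbc | exact absurd h10 hbc
             | exact absurd h9 hac | exact absurd h10 hac
             | exact absurd h9.symm hab | exact absurd h10.symm hab
             | exact absurd h9.symm hbc | exact absurd h10.symm hbc
             | exact absurd h9.symm hac | exact absurd h10.symm hac)
      · intro k hk1 hk2 hPk
        have hkF : Z.seq k ⊆ F := by rw [hPk.1]; exact pair_subset haF hcF
        rcases hwin k hk1 hk2 hkF with rfl | rfl | rfl | rfl | rfl | rfl <;>
          simp only [P0, P0', P1, P1', P2, P2'] at hPk <;>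
          (obtain ⟨h9, h10⟩ := hPk
           first
           | exact absurd h9 hab | exact absurd h10 hab
           | exact absurd h9 hbc | exact absurd h10 hbc
           | exact absurd h9 hac | exact absurd h10 hac
           | exact absurd h9.symm hab | exact absurd h10.symm hab
           | exact absurd h9.symm hbc | exact absurd h10.symm hbc
           | exact absurd h9.symm hac | exact absurd h10.symm hac)
  · -- M2 pattern: crossings (a,b,c), (c,a,b), (b,c,a)
    obtain ⟨P1, P1'⟩ := cr_passes Z i1 (Ne.symm hac) hab (Ne.symm hbc) e1 e1'
    obtain ⟨P2, P2'⟩ := cr_passes Z i2 hbc (Ne.symm hac) (Ne.symm hab) e2 e2'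
    have hpe : i0 + Z.period = i3 :=
      period_eq hF3 Z (pair_subset haF hbF) (pair_subset hbF hcF) h01 h12 h23
        c0 c0' c3 c3' (by rw [e1]; exact pair_subset hcF haF)
        (by rw [e2]; exact pair_subset hbF hcF)
        (by rw [e1]; exact d2) (by rw [e2]; exact d1) b1 b2 b3
    intro u v huv
    rcases huv with h | h | h <;> rw [Prod.mk.injEq] at h <;> obtain ⟨rfl, rfl⟩ := h
    · refine count_edge Z i0 i3 i0 (i1+1) u v hpe (le_refl i0) (by omega) (by omega)
        ((P0 u v).2 ⟨rfl, rfl⟩) ((P1' u v).2 ⟨rfl, rfl⟩) ?_ ?_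
      · intro k hk1 hk2 hPk
        have hkF : Z.seq k ⊆ F := by rw [hPk.1]; exact pair_subset haF hbF
        rcases hwin k hk1 hk2 hkF with rfl | rfl | rfl | rfl | rfl | rfl <;>
          simp only [P0, P0', P1, P1', P2, P2'] at hPk <;>
          first
          | (left; rfl)
          | (right; rfl)
          | (obtain ⟨h9, h10⟩ := hPk
             first
             | exact absurd h9 hab | exact absurd h10 hab
             | exact absurd h9 hbc | exact absurd h10 hbc
             | exact absurd h9 hac | exact absurd h10 hac
             | exact absurd h9.symm hab | exact absurd h10.symm hab
             | exact absurd h9.symm hbc | exact absurd h10.symm hbc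
             | exact absurd h9.symm hac | exact absurd h10.symm hac)
      · intro k hk1 hk2 hPk
        have hkF : Z.seq k ⊆ F := by rw [hPk.1]; exact pair_subset hbF haF
        rcases hwin k hk1 hk2 hkF with rfl | rfl | rfl | rfl | rfl | rfl <;>
          simp only [P0, P0', P1, P1', P2, P2'] at hPk <;>
          (obtain ⟨h9, h10⟩ := hPk
           first
           | exact absurd h9 hab | exact absurd h10 hab
           | exact absurd h9 hbc | exact absurd h10 hbc
           | exact absurd h9 hac | exact absurd h10 hac
           | exact absurd h9.symm hab | exact absurd h10.symm hab
           | exact absurd h9.symm hbc | exact absurd h10.symm hbc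
           | exact absurd h9.symm hac | exact absurd h10.symm hac)
    · refine count_edge Z i0 i3 (i0+1) i2 u v hpe (by omega) (by omega) (by omega)
        ((P0' u v).2 ⟨rfl, rfl⟩) ((P2 u v).2 ⟨rfl, rfl⟩) ?_ ?_
      · intro k hk1 hk2 hPk
        have hkF : Z.seq k ⊆ F := by rw [hPk.1]; exact pair_subset hbF hcF
        rcases hwin k hk1 hk2 hkF with rfl | rfl | rfl | rfl | rfl | rfl <;>
          simp only [P0, P0', P1, P1', P2, P2'] at hPk <;>
          first
          | (left; rfl)
          | (right; rfl)
          | (obtain ⟨h9, h10⟩ := hPk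
             first
             | exact absurd h9 hab | exact absurd h10 hab
             | exact absurd h9 hbc | exact absurd h10 hbc
             | exact absurd h9 hac | exact absurd h10 hac
             | exact absurd h9.symm hab | exact absurd h10.symm hab
             | exact absurd h9.symm hbc | exact absurd h10.symm hbc
             | exact absurd h9.symm hac | exact absurd h10.symm hac)
      · intro k hk1 hk2 hPk
        have hkF : Z.seq k ⊆ F := by rw [hPk.1]; exact pair_subset hcF hbF
        rcases hwin k hk1 hk2 hkF with rfl | rfl | rfl | rfl | rfl | rfl <;>
          simp only [P0, P0', P1, P1', P2, P2'] at hPk <;>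
          (obtain ⟨h9, h10⟩ := hPk
           first
           | exact absurd h9 hab | exact absurd h10 hab
           | exact absurd h9 hbc | exact absurd h10 hbc
           | exact absurd h9 hac | exact absurd h10 hac
           | exact absurd h9.symm hab | exact absurd h10.symm hab
           | exact absurd h9.symm hbc | exact absurd h10.symm hbc
           | exact absurd h9.symm hac | exact absurd h10.symm hac)
    · refine count_edge Z i0 i3 i1 (i2+1) u v hpe (by omega) (by omega) (by omega)
        ((P1 u v).2 ⟨rfl, rfl⟩) ((P2' u v).2 ⟨rfl, rfl⟩) ?_ ?_
      · intro k hk1 hk2 hPk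
        have hkF : Z.seq k ⊆ F := by rw [hPk.1]; exact pair_subset hcF haF
        rcases hwin k hk1 hk2 hkF with rfl | rfl | rfl | rfl | rfl | rfl <;>
          simp only [P0, P0', P1, P1', P2, P2'] at hPk <;>
          first
          | (left; rfl)
          | (right; rfl)
          | (obtain ⟨h9, h10⟩ := hPk
             first
             | exact absurd h9 hab | exact absurd h10 hab
             | exact absurd h9 hbc | exact absurd h10 hbc
             | exact absurd h9 hac | exact absurd h10 hac
             | exact absurd h9.symm hab | exact absurd h10.symm hab
             | exact absurd h9.symm hbc | exact absurd h10.symm hbc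
             | exact absurd h9.symm hac | exact absurd h10.symm hac)
      · intro k hk1 hk2 hPk
        have hkF : Z.seq k ⊆ F := by rw [hPk.1]; exact pair_subset haF hcF
        rcases hwin k hk1 hk2 hkF with rfl | rfl | rfl | rfl | rfl | rfl <;>
          simp only [P0, P0', P1, P1', P2, P2'] at hPk <;>
          (obtain ⟨h9, h10⟩ := hPk
           first
           | exact absurd h9 hab | exact absurd h10 hab
           | exact absurd h9 hbc | exact absurd h10 hbc
           | exact absurd h9 hac | exact absurd h10 hac
           | exact absurd h9.symm hab | exact absurd h10.symm hab
           | exact absurd h9.symm hbc | exact absurd h10.symm hbc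
           | exact absurd h9.symm hac | exact absurd h10.symm hac)

end ZAux



open scoped Classical in
/-- if `F` is locally z-knotted with z-monodromy of type (M1)
or (M2), then the unique zigzag through `F` passes through each edge of `F`
exactly twice, both times in the same direction: it traverses twice each of
the three oriented edges forming one cycle of `D_F`. -/
theorem M1_M2_zigzag_same_direction {V : Type} [Fintype V] [DecidableEq V]
    (T : Triangulation V) (F : Finset V) (hF : F ∈ T.faces)
    (hloc : T.LocallyZKnotted F) (htype : T.MFIsId F ∨ T.MFIsD F)
    (Z : T.Zigzag) (hZ : Z.Meets F) :
    ∃ x y z : V, ({x, y, z} : Finset V) = F ∧ x ≠ y ∧ y ≠ z ∧ x ≠ z ∧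
      ∀ u v : V, ((u, v) = (x, y) ∨ (u, v) = (y, z) ∨ (u, v) = (z, x)) →
        ((Finset.range Z.period).filter fun i => Z.Passes i u v).card = 2 ∧
        ∀ i, ¬ Z.Passes i v u := by
  obtain ⟨i0, a, b, c, habc, hab, hbc, hac, c0, c0'⟩ := ZAux.initial_crossing hF Z hZ
  have haF : a ∈ F := by rw [← habc]; simp
  have hbF : b ∈ F := by rw [← habc]; simp
  have hcF : c ∈ F := by rw [← habc]; simp
  have hperm1 : ({b, c, a} : Finset V) = F := by
    rw [← habc]; ext x
    simp only [Finset.mem_insert, Finset.mem_singleton]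
    tauto
  have hperm2 : ({c, a, b} : Finset V) = F := by
    rw [← habc]; ext x
    simp only [Finset.mem_insert, Finset.mem_singleton]
    tauto
  refine ⟨a, b, c, habc, hab, hbc, hac, ?_⟩
  rcases htype with hid | hD
  · obtain ⟨i1, h01, e1, e1', bt1⟩ :=
      ZAux.step_gen hF Z i0 a b c b c a habc hab hbc hac hperm1 hbc (Ne.symm hac)
        (Ne.symm hab) (hid b c hbF hcF hbc) c0 c0'
    obtain ⟨i2, h12, e2, e2', bt2⟩ :=
      ZAux.step_gen hF Z i1 b c a c a b hperm1 hbc (Ne.symm hac) (Ne.symm hab) hperm2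
        (Ne.symm hac) hab (Ne.symm hbc) (hid c a hcF haF (Ne.symm hac)) e1 e1'
    obtain ⟨i3, h23, e3, e3', bt3⟩ :=
      ZAux.step_gen hF Z i2 c a b a b c hperm2 (Ne.symm hac) hab (Ne.symm hbc) habc
        hab hbc hac (hid a b haF hbF hab) e2 e2'
    exact ZAux.final hF Z a b c habc hab hbc hac i0 i1 i2 i3 h01 h12 h23 c0 c0'
      e3 e3' bt1 bt2 bt3 (Or.inl ⟨e1, e1', e2, e2'⟩)
  · obtain ⟨i1, h01, e1, e1', bt1⟩ :=
      ZAux.step_gen hF Z i0 a b c c a b habc hab hbc hac hperm2 (Ne.symm hac) hab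
        (Ne.symm hbc) (hD b c a hperm1 hbc (Ne.symm hac) (Ne.symm hab)) c0 c0'
    obtain ⟨i2, h12, e2, e2', bt2⟩ :=
      ZAux.step_gen hF Z i1 c a b b c a hperm2 (Ne.symm hac) hab (Ne.symm hbc) hperm1
        hbc (Ne.symm hac) (Ne.symm hab) (hD a b c habc hab hbc hac) e1 e1'
    obtain ⟨i3, h23, e3, e3', bt3⟩ :=
      ZAux.step_gen hF Z i2 b c a a b c hperm1 hbc (Ne.symm hac) (Ne.symm hab) habc
        hab hbc hac (hD c a b hperm2 (Ne.symm hac) hab (Ne.symm hbc)) e2 e2'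
    exact ZAux.final hF Z a b c habc hab hbc hac i0 i1 i2 i3 h01 h12 h23 c0 c0'
      e3 e3' bt1 bt2 bt3 (Or.inr ⟨e1, e1', e2, e2'⟩)
end
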